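/- arXiv:1709.09893 — 7 statements merged into one kernel-verified Lean document; each statement's English description precedes it below -/
import Mathlib

section
/- Let H be a real (or complex) Hilbert space and let T : [0,∞) → (H →L H) be a strongly continuous semigroup of bounded linear operators (T(0) = Id, T(t+s) = T(t) ∘ T(s) for all t,s ≥ 0, and t ↦ T(t)x is continuous for every x ∈ H). Assume there exists T₀ > 0 with T(T₀) = 0, and let B be a bounded linear operator on H. Then there exist positive numbers ε₀, M, C such that for every ε ∈ (0, ε₀) and every u₀ ∈ H there is a unique continuous function u : [0,∞) → H satisfying the Duhamel equation u(t) = T(t)u₀ + ε ∫₀ᵗ T(t−s)(B u(s)) ds for all t ≥ 0, and this solution satisfies ‖u(t)‖ ≤ M · min(1, e^{−(C ln(1/ε)) t}/ε) · ‖u₀‖ for all t ≥ 0. -/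
open MeasureTheory

set_option maxHeartbeats 4000000

/-- If `(T t)` is a strongly continuous semigroup on a Hilbert space `H`
with `T T₀ = 0` for some `T₀ > 0`, and `B` is a bounded operator, then there are
`ε₀, M, C > 0` such that for every `ε ∈ (0, ε₀)` and every `u₀ ∈ H`, the Duhamel
(mild-solution) equation `u t = T t u₀ + ε ∫₀ᵗ T (t−s) (B (u s)) ds` has a unique
continuous solution on `[0,∞)`, and it satisfies
`‖u t‖ ≤ M · min(1, e^{−(C ln ε⁻¹) t}/ε) · ‖u₀‖`. -/
theorem stmt0
    {H : Type*} [NormedAddCommGroup H] [InnerProductSpace ℝ H] [CompleteSpace H]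
    (T : ℝ → H →L[ℝ] H)
    (hT0 : T 0 = ContinuousLinearMap.id ℝ H)
    (hTadd : ∀ s t : ℝ, 0 ≤ s → 0 ≤ t → T (s + t) = (T s).comp (T t))
    (hTcont : ∀ x : H, ContinuousOn (fun t => T t x) (Set.Ici 0))
    (T₀ : ℝ) (hT₀pos : 0 < T₀) (hnil : T T₀ = 0)
    (B : H →L[ℝ] H) :
    ∃ ε₀ M C : ℝ, 0 < ε₀ ∧ 0 < M ∧ 0 < C ∧
      ∀ ε ∈ Set.Ioo (0:ℝ) ε₀, ∀ u₀ : H,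
        (∃ u : ℝ → H, ContinuousOn u (Set.Ici 0) ∧
          (∀ t : ℝ, 0 ≤ t →
            u t = T t u₀ + ε • ∫ s in (0:ℝ)..t, T (t - s) (B (u s))) ∧
          (∀ t : ℝ, 0 ≤ t →
            ‖u t‖ ≤ M * min 1 (Real.exp (-(C * Real.log ε⁻¹) * t) / ε) * ‖u₀‖)) ∧
        (∀ u v : ℝ → H,
          ContinuousOn u (Set.Ici 0) →
          (∀ t : ℝ, 0 ≤ t →
            u t = T t u₀ + ε • ∫ s in (0:ℝ)..t, T (t - s) (B (u s))) →
          ContinuousOn v (Set.Ici 0) →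
          (∀ t : ℝ, 0 ≤ t →
            v t = T t u₀ + ε • ∫ s in (0:ℝ)..t, T (t - s) (B (v s))) →
          Set.EqOn u v (Set.Ici 0)) := by
  -- T vanishes beyond T₀
  have hTzero : ∀ t : ℝ, T₀ ≤ t → T t = 0 := by
    intro t ht
    have h1 : (0:ℝ) ≤ t - T₀ := by linarith
    have h2 := hTadd (t - T₀) T₀ h1 hT₀pos.le
    rw [sub_add_cancel] at h2
    rw [h2, hnil, ContinuousLinearMap.comp_zero]
  -- uniform bound on the semigroup
  obtain ⟨K, hK1, hKbd⟩ : ∃ K : ℝ, 1 ≤ K ∧ ∀ t : ℝ, ‖T (max t 0)‖ ≤ K := by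
    obtain ⟨C, hC⟩ : ∃ C, ∀ i : Set.Icc (0:ℝ) T₀, ‖T i‖ ≤ C := by
      apply banach_steinhaus
      intro x
      obtain ⟨C, hC⟩ := isCompact_Icc.exists_bound_of_continuousOn
        ((hTcont x).mono Set.Icc_subset_Ici_self)
      exact ⟨C, fun i => hC i i.2⟩
    refine ⟨max C 1, le_max_right _ _, fun t => ?_⟩
    rcases le_or_gt (max t 0) T₀ with h | h
    · exact le_trans (hC ⟨max t 0, le_max_right _ _, h⟩) (le_max_left _ _)
    · rw [hTzero _ h.le]
      simp only [norm_zero]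
      positivity
  have hKpos : (0:ℝ) < K := lt_of_lt_of_le one_pos hK1
  set S : ℝ → H →L[ℝ] H := fun t => T (max t 0) with hSdef
  have hSeq : ∀ t : ℝ, 0 ≤ t → S t = T t := by
    intro t ht; simp only [hSdef, max_eq_left ht]
  have hSnorm : ∀ (t : ℝ) (x : H), ‖S t x‖ ≤ K * ‖x‖ := by
    intro t x
    exact le_trans ((S t).le_opNorm x) (mul_le_mul_of_nonneg_right (hKbd t) (norm_nonneg x))
  have hSzero : ∀ t : ℝ, T₀ ≤ t → S t = 0 := by
    intro t ht; rw [hSeq t (le_trans hT₀pos.le ht)]; exact hTzero t ht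
  have hScx : ∀ x : H, Continuous fun t => S t x := by
    intro x
    exact (hTcont x).comp_continuous (continuous_id.max continuous_const)
      (fun t => le_max_right t 0)
  have hSc : Continuous fun p : ℝ × H => S p.1 p.2 := by
    rw [continuous_iff_continuousAt]
    rintro ⟨a, b⟩
    rw [ContinuousAt, tendsto_iff_dist_tendsto_zero]
    have hb : Filter.Tendsto (fun p : ℝ × H => K * dist p.2 b + dist (S p.1 b) (S a b))
        (nhds (a, b)) (nhds 0) := by
      have hc : Continuous fun p : ℝ × H => K * dist p.2 b + dist (S p.1 b) (S a b) :=
        (continuous_const.mul (continuous_snd.dist continuous_const)).add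
          (((hScx b).comp continuous_fst).dist continuous_const)
      have h0 := hc.continuousAt (x := (a, b))
      simpa [ContinuousAt] using h0
    refine squeeze_zero (fun p => dist_nonneg) (fun p => ?_) hb
    calc dist (S p.1 p.2) (S a b)
        ≤ dist (S p.1 p.2) (S p.1 b) + dist (S p.1 b) (S a b) := dist_triangle _ _ _
      _ ≤ K * dist p.2 b + dist (S p.1 b) (S a b) := by
          gcongr
          rw [dist_eq_norm, ← map_sub, dist_eq_norm]
          exact hSnorm _ _
  -- the weight
  set β : ℝ := ‖B‖ + 1 with hβdef
  have hβpos : (0:ℝ) < β := by positivity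
  have hBβ : ‖B‖ ≤ β := by simp [hβdef]
  set lam : ℝ := K * β with hlamdef
  have hlampos : (0:ℝ) < lam := by positivity
  -- exponential integral bound
  have expInt : ∀ a : ℝ, 0 ≤ a →
      ∫ s in (0:ℝ)..a, Real.exp (-(lam * (a - s))) ≤ 1 / lam := by
    intro a ha
    have h1 : (∫ s in (0:ℝ)..a, Real.exp (-(lam * (a - s))))
        = ∫ s in (0:ℝ)..a, Real.exp (-lam * s) := by
      rw [show (fun s => Real.exp (-(lam * (a - s)))) = fun s => Real.exp (-lam * (a - s)) by
        funext s; ring_nf]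
      rw [intervalIntegral.integral_comp_sub_left (fun x => Real.exp (-lam * x)) a]
      simp
    have hne : (-lam) ≠ 0 := neg_ne_zero.mpr hlampos.ne'
    rw [h1, intervalIntegral.integral_comp_mul_left Real.exp hne, mul_zero, integral_exp,
      Real.exp_zero, smul_eq_mul]
    have h2 := Real.exp_pos (-lam * a)
    have h3 : Real.exp (-lam * a) ≤ 1 := Real.exp_le_one_iff.mpr (by have := mul_nonneg hlampos.le ha; linarith)
    rw [show (-lam)⁻¹ * (Real.exp (-lam * a) - 1) = (1 - Real.exp (-lam * a)) / lam by
      field_simp; ring]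
    gcongr
    linarith
  -- generic integral bound
  have hIcont : ∀ (a : ℝ) (g : ℝ → H), ContinuousOn g (Set.Icc 0 a) →
      ContinuousOn (fun s => S (a - s) (B (g s))) (Set.Icc 0 a) := by
    intro a g hg
    exact hSc.comp_continuousOn
      ((continuousOn_const.sub continuousOn_id).prodMk (B.continuous.comp_continuousOn hg))
  have intBound2 : ∀ a : ℝ, 0 ≤ a → ∀ g : ℝ → H, ContinuousOn g (Set.Icc 0 a) →
      ∀ Q : ℝ, 0 ≤ Q → (∀ s ∈ Set.Icc (0:ℝ) a, ‖g s‖ ≤ Q * Real.exp (-(lam * (a - s)))) →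
      ‖∫ s in (0:ℝ)..a, S (a - s) (B (g s))‖ ≤ K * (‖B‖ * Q) / lam := by
    intro a ha g hg Q hQ hgQ
    calc ‖∫ s in (0:ℝ)..a, S (a - s) (B (g s))‖
        ≤ ∫ s in (0:ℝ)..a, ‖S (a - s) (B (g s))‖ :=
          intervalIntegral.norm_integral_le_integral_norm ha
      _ ≤ ∫ s in (0:ℝ)..a, (K * (‖B‖ * Q)) * Real.exp (-(lam * (a - s))) := by
          apply intervalIntegral.integral_mono_on ha
          · apply ContinuousOn.intervalIntegrable
            rw [Set.uIcc_of_le ha]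
            exact (hIcont a g hg).norm
          · apply Continuous.intervalIntegrable
            exact continuous_const.mul (Real.continuous_exp.comp
              ((continuous_const.mul (continuous_const.sub continuous_id)).neg))
          · intro s hs
            calc ‖S (a - s) (B (g s))‖ ≤ K * ‖B (g s)‖ := hSnorm _ _
              _ ≤ K * (‖B‖ * ‖g s‖) :=
                  mul_le_mul_of_nonneg_left (B.le_opNorm (g s)) hKpos.le
              _ ≤ K * (‖B‖ * (Q * Real.exp (-(lam * (a - s))))) := by
                  have h1 := mul_le_mul_of_nonneg_left (hgQ s hs)
                    (mul_nonneg hKpos.le (norm_nonneg B))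
                  linarith
              _ = (K * (‖B‖ * Q)) * Real.exp (-(lam * (a - s))) := by ring
      _ = (K * (‖B‖ * Q)) * ∫ s in (0:ℝ)..a, Real.exp (-(lam * (a - s))) :=
          intervalIntegral.integral_const_mul _ _
      _ ≤ (K * (‖B‖ * Q)) * (1 / lam) := by
          have h2 : (0:ℝ) ≤ K * (‖B‖ * Q) := by positivity
          exact mul_le_mul_of_nonneg_left (expInt a ha) h2
      _ = K * (‖B‖ * Q) / lam := by ring
  have intBound : ∀ a : ℝ, 0 ≤ a → ∀ g : ℝ → H, ContinuousOn g (Set.Icc 0 a) →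
      ∀ Q : ℝ, 0 ≤ Q → (∀ s ∈ Set.Icc (0:ℝ) a, ‖g s‖ ≤ Q) →
      ‖∫ s in (0:ℝ)..a, Real.exp (-(lam * (a - s))) • S (a - s) (B (g s))‖
        ≤ K * (‖B‖ * Q) / lam := by
    intro a ha g hg Q hQ hgQ
    have h1 : (∫ s in (0:ℝ)..a, Real.exp (-(lam * (a - s))) • S (a - s) (B (g s)))
        = ∫ s in (0:ℝ)..a, S (a - s) (B (Real.exp (-(lam * (a - s))) • g s)) := by
      apply intervalIntegral.integral_congr
      intro s _
      simp only [_root_.map_smul]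
    rw [h1]
    apply intBound2 a ha _ ?_ Q hQ
    · intro s hs
      rw [norm_smul, Real.norm_eq_abs, abs_of_pos (Real.exp_pos _), mul_comm]
      exact mul_le_mul_of_nonneg_right (hgQ s hs) (Real.exp_pos _).le
    · exact (Real.continuous_exp.comp
        ((continuous_const.mul (continuous_const.sub continuous_id)).neg)).continuousOn.smul hg
  refine ⟨min (4:ℝ)⁻¹ ((K * β * T₀) ^ 2)⁻¹, 2 * K, (2 * T₀)⁻¹, ?_, by positivity, by positivity, ?_⟩
  · positivity
  intro ε hε u₀
  obtain ⟨hεpos, hεlt⟩ := hε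
  have hε4 : ε ≤ (4:ℝ)⁻¹ := le_trans hεlt.le (min_le_left _ _)
  have hεK : ε ≤ ((K * β * T₀) ^ 2)⁻¹ := le_trans hεlt.le (min_le_right _ _)
  have hε1 : ε < 1 := by linarith
  -- facts about r = sqrt ε
  set r : ℝ := Real.sqrt ε with hrdef
  have hrpos : 0 < r := Real.sqrt_pos.mpr hεpos
  have hrr : r * r = ε := Real.mul_self_sqrt hεpos.le
  have hr2 : r ≤ 2⁻¹ := by
    have h1 : Real.sqrt ε ≤ Real.sqrt (4:ℝ)⁻¹ := Real.sqrt_le_sqrt hε4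
    have h2 : Real.sqrt (4:ℝ)⁻¹ = 2⁻¹ := by
      rw [show ((4:ℝ)⁻¹ = (2⁻¹)^2) by norm_num, Real.sqrt_sq (by norm_num)]
    rw [hrdef]; linarith
  have hKβT : 0 < K * β * T₀ := by positivity
  have hq : ε * (K * ‖B‖ * T₀) ≤ r := by
    have h1 : r ≤ (K * β * T₀)⁻¹ := by
      have h2 : Real.sqrt ε ≤ Real.sqrt ((K * β * T₀) ^ 2)⁻¹ := Real.sqrt_le_sqrt hεK
      have h3 : Real.sqrt ((K * β * T₀) ^ 2)⁻¹ = (K * β * T₀)⁻¹ := by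
        rw [Real.sqrt_inv, Real.sqrt_sq hKβT.le]
      rw [hrdef]; linarith
    have h4 : r * (K * β * T₀) ≤ 1 := by
      calc r * (K * β * T₀) ≤ (K * β * T₀)⁻¹ * (K * β * T₀) :=
            mul_le_mul_of_nonneg_right h1 hKβT.le
        _ = 1 := inv_mul_cancel₀ hKβT.ne'
    calc ε * (K * ‖B‖ * T₀) ≤ ε * (K * β * T₀) :=
          mul_le_mul_of_nonneg_left (mul_le_mul_of_nonneg_right
            (mul_le_mul_of_nonneg_left hBβ hKpos.le) hT₀pos.le) hεpos.le
      _ = r * (r * (K * β * T₀)) := by rw [← hrr]; ring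
      _ ≤ r * 1 := mul_le_mul_of_nonneg_left h4 hrpos.le
      _ = r := mul_one r
  have hcontr_const : ε * (K * ‖B‖) / lam ≤ ε := by
    have h1 : K * ‖B‖ ≤ lam := by
      rw [hlamdef]; exact mul_le_mul_of_nonneg_left hBβ hKpos.le
    rw [div_le_iff₀ hlampos]
    exact mul_le_mul_of_nonneg_left h1 hεpos.le
  -- the fixed point map
  set Fmap : (BoundedContinuousFunction ℝ H) → ℝ → H := fun v t =>
    Real.exp (-(lam * max t 0)) • S (max t 0) u₀ +
      ε • ∫ s in (0:ℝ)..(max t 0),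
        Real.exp (-(lam * (max t 0 - s))) • S (max t 0 - s) (B (v s)) with hFdef
  have hFcont : ∀ v, Continuous (Fmap v) := by
    intro v
    apply Continuous.add
    · exact (Real.continuous_exp.comp
        ((continuous_const.mul (continuous_id.max continuous_const)).neg)).smul
        ((hScx u₀).comp (continuous_id.max continuous_const))
    · apply Continuous.const_smul
      have h1 : Continuous fun p : ℝ × ℝ => max p.1 0 - p.2 :=
        (continuous_fst.max continuous_const).sub continuous_snd
      have h2 : Continuous (Function.uncurry fun t s =>
          Real.exp (-(lam * (max t 0 - s))) • S (max t 0 - s) (B (v s))) :=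
        (Real.continuous_exp.comp ((continuous_const.mul h1).neg)).smul
          (hSc.comp (h1.prodMk (B.continuous.comp (v.continuous.comp continuous_snd))))
      exact intervalIntegral.continuous_parametric_intervalIntegral_of_continuous (μ := volume)
        h2 (continuous_id.max continuous_const)
  have hFbd : ∀ (v : BoundedContinuousFunction ℝ H) (t : ℝ),
      ‖Fmap v t‖ ≤ K * ‖u₀‖ + ε * (K * (‖B‖ * ‖v‖) / lam) := by
    intro v t
    rw [hFdef]
    apply le_trans (norm_add_le _ _)
    have h1 : ‖Real.exp (-(lam * max t 0)) • S (max t 0) u₀‖ ≤ K * ‖u₀‖ := by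
      rw [norm_smul, Real.norm_eq_abs, abs_of_pos (Real.exp_pos _)]
      have h2 : Real.exp (-(lam * max t 0)) ≤ 1 := Real.exp_le_one_iff.mpr
        (by have := mul_nonneg hlampos.le (le_max_right t 0); linarith)
      calc Real.exp (-(lam * max t 0)) * ‖S (max t 0) u₀‖
          ≤ 1 * ‖S (max t 0) u₀‖ := mul_le_mul_of_nonneg_right h2 (norm_nonneg _)
        _ = ‖S (max t 0) u₀‖ := one_mul _
        _ ≤ K * ‖u₀‖ := hSnorm _ _
    have h2 : ‖ε • ∫ s in (0:ℝ)..(max t 0),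
        Real.exp (-(lam * (max t 0 - s))) • S (max t 0 - s) (B (v s))‖
        ≤ ε * (K * (‖B‖ * ‖v‖) / lam) := by
      rw [norm_smul, Real.norm_eq_abs, abs_of_pos hεpos]
      apply mul_le_mul_of_nonneg_left _ hεpos.le
      exact intBound (max t 0) (le_max_right t 0) v v.continuous.continuousOn ‖v‖
        (norm_nonneg v) (fun s _ => v.norm_coe_le_norm s)
    linarith
  set Φ : BoundedContinuousFunction ℝ H → BoundedContinuousFunction ℝ H := fun v =>
    BoundedContinuousFunction.ofNormedAddCommGroup (Fmap v) (hFcont v) _ (hFbd v) with hΦdef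
  have hΦcoe : ∀ v t, Φ v t = Fmap v t := fun v t => rfl
  -- integrability of the weighted integrand
  have hIIw : ∀ (a : ℝ) (g : ℝ → H), Continuous g →
      IntervalIntegrable (fun s => Real.exp (-(lam * (a - s))) • S (a - s) (B (g s)))
        volume 0 a := by
    intro a g hg
    apply Continuous.intervalIntegrable
    have h1 : Continuous fun s : ℝ => a - s := continuous_const.sub continuous_id
    exact (Real.continuous_exp.comp ((continuous_const.mul h1).neg)).smul
      (hSc.comp (h1.prodMk (B.continuous.comp hg)))
  -- contraction
  have hΦlip : ∀ v w, dist (Φ v) (Φ w) ≤ 2⁻¹ * dist v w := by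
    intro v w
    rw [BoundedContinuousFunction.dist_le (by positivity)]
    intro t
    rw [hΦcoe, hΦcoe, dist_eq_norm]
    have hdiff : Fmap v t - Fmap w t = ε • ∫ s in (0:ℝ)..(max t 0),
        Real.exp (-(lam * (max t 0 - s))) • S (max t 0 - s) (B ((v - w) s)) := by
      rw [hFdef]
      simp only
      rw [show Real.exp (-(lam * max t 0)) • S (max t 0) u₀ +
          ε • (∫ s in (0:ℝ)..(max t 0), Real.exp (-(lam * (max t 0 - s))) • S (max t 0 - s) (B (v s))) -
          (Real.exp (-(lam * max t 0)) • S (max t 0) u₀ +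
          ε • (∫ s in (0:ℝ)..(max t 0), Real.exp (-(lam * (max t 0 - s))) • S (max t 0 - s) (B (w s))))
          = ε • ((∫ s in (0:ℝ)..(max t 0), Real.exp (-(lam * (max t 0 - s))) • S (max t 0 - s) (B (v s))) -
          (∫ s in (0:ℝ)..(max t 0), Real.exp (-(lam * (max t 0 - s))) • S (max t 0 - s) (B (w s)))) by
        rw [smul_sub]; abel]
      rw [← intervalIntegral.integral_sub (hIIw _ v v.continuous) (hIIw _ w w.continuous)]
      congr 1
      apply intervalIntegral.integral_congr
      intro s _
      simp only [BoundedContinuousFunction.coe_sub, Pi.sub_apply, map_sub, smul_sub]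
    rw [hdiff, norm_smul, Real.norm_eq_abs, abs_of_pos hεpos]
    have h2 : ‖∫ s in (0:ℝ)..(max t 0),
        Real.exp (-(lam * (max t 0 - s))) • S (max t 0 - s) (B ((v - w) s))‖
        ≤ K * (‖B‖ * dist v w) / lam := by
      apply intBound (max t 0) (le_max_right t 0) _ (v - w).continuous.continuousOn
        (dist v w) dist_nonneg
      intro s _
      calc ‖(v - w) s‖ = dist (v s) (w s) := by
            simp [BoundedContinuousFunction.coe_sub, dist_eq_norm]
        _ ≤ dist v w := BoundedContinuousFunction.dist_coe_le_dist s
    calc ε * ‖∫ s in (0:ℝ)..(max t 0),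
          Real.exp (-(lam * (max t 0 - s))) • S (max t 0 - s) (B ((v - w) s))‖
        ≤ ε * (K * (‖B‖ * dist v w) / lam) := mul_le_mul_of_nonneg_left h2 hεpos.le
      _ = (ε * (K * ‖B‖) / lam) * dist v w := by ring
      _ ≤ ε * dist v w := mul_le_mul_of_nonneg_right hcontr_const dist_nonneg
      _ ≤ 2⁻¹ * dist v w := mul_le_mul_of_nonneg_right (by linarith) dist_nonneg
  have hcontr : ContractingWith (⟨2⁻¹, by norm_num⟩ : NNReal) Φ := by
    constructor
    · exact NNReal.coe_lt_coe.mp (show (2⁻¹:ℝ) < ((1:NNReal):ℝ) by norm_num)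
    · apply LipschitzWith.of_dist_le_mul
      intro x y
      exact le_trans (hΦlip x y) (le_of_eq rfl)
  set v : BoundedContinuousFunction ℝ H := hcontr.fixedPoint Φ with hvdef
  have hfix : Φ v = v := hcontr.fixedPoint_isFixedPt
  -- the solution
  set u : ℝ → H := fun t => Real.exp (lam * max t 0) • v t with hudef
  have hu_cont : Continuous u :=
    (Real.continuous_exp.comp (continuous_const.mul (continuous_id.max continuous_const))).smul
      v.continuous
  have hveq : ∀ t : ℝ, v t = Fmap v t := by
    intro t; rw [← hΦcoe v t, hfix]
  have hu_eq : ∀ t : ℝ, 0 ≤ t →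
      u t = T t u₀ + ε • ∫ s in (0:ℝ)..t, T (t - s) (B (u s)) := by
    intro t ht
    have hmax : max t 0 = t := max_eq_left ht
    rw [hudef]
    simp only
    rw [hveq t, hFdef]
    simp only [hmax]
    rw [smul_add, smul_smul, ← Real.exp_add, add_neg_cancel, Real.exp_zero, one_smul,
      smul_comm (Real.exp (lam * t)) ε, ← intervalIntegral.integral_smul]
    rw [hSeq t ht]
    congr 1
    congr 1
    apply intervalIntegral.integral_congr
    intro s hs
    rw [Set.uIcc_of_le ht] at hs
    have hs0 : (0:ℝ) ≤ s := hs.1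
    have hst : s ≤ t := hs.2
    have hmaxs : max s 0 = s := max_eq_left hs0
    beta_reduce
    rw [smul_smul, ← Real.exp_add, show lam * t + -(lam * (t - s)) = lam * s by ring,
      hSeq (t - s) (by linarith), hmaxs, _root_.map_smul, _root_.map_smul]
  -- integrability for the unweighted integrand
  have hSint : ∀ a b t : ℝ, IntervalIntegrable (fun s => S (t - s) (B (u s))) volume a b := by
    intro a b t
    apply Continuous.intervalIntegrable
    have h1 : Continuous fun s : ℝ => t - s := continuous_const.sub continuous_id
    exact hSc.comp (h1.prodMk (B.continuous.comp hu_cont))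
  have hu_eqS : ∀ t : ℝ, 0 ≤ t →
      u t = T t u₀ + ε • ∫ s in (0:ℝ)..t, S (t - s) (B (u s)) := by
    intro t ht
    rw [hu_eq t ht]
    congr 2
    apply intervalIntegral.integral_congr
    intro s hs
    rw [Set.uIcc_of_le ht] at hs
    beta_reduce
    rw [hSeq (t - s) (by linarith [hs.2])]
  have hcomp : ∀ a b : ℝ, 0 ≤ a → 0 ≤ b → ∀ x : H, T (a + b) x = T a (T b x) := by
    intro a b ha hb x
    rw [hTadd a b ha hb]; rfl
  have hrestart : ∀ t₀ t : ℝ, 0 ≤ t₀ → t₀ ≤ t →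
      u t = T (t - t₀) (u t₀) + ε • ∫ s in t₀..t, S (t - s) (B (u s)) := by
    intro t₀ t h0 h1
    have ht : 0 ≤ t := le_trans h0 h1
    have hsplit : (∫ s in (0:ℝ)..t, S (t - s) (B (u s)))
        = (∫ s in (0:ℝ)..t₀, S (t - s) (B (u s))) + ∫ s in t₀..t, S (t - s) (B (u s)) :=
      (intervalIntegral.integral_add_adjacent_intervals (hSint _ _ _) (hSint _ _ _)).symm
    have hfirst : (∫ s in (0:ℝ)..t₀, S (t - s) (B (u s)))
        = T (t - t₀) (∫ s in (0:ℝ)..t₀, S (t₀ - s) (B (u s))) := by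
      rw [← ContinuousLinearMap.intervalIntegral_comp_comm (T (t - t₀)) (hSint 0 t₀ t₀)]
      apply intervalIntegral.integral_congr
      intro s hs
      rw [Set.uIcc_of_le h0] at hs
      beta_reduce
      rw [hSeq (t - s) (by linarith [hs.2]), hSeq (t₀ - s) (by linarith [hs.2]),
        show t - s = (t - t₀) + (t₀ - s) by ring,
        hcomp (t - t₀) (t₀ - s) (by linarith) (by linarith [hs.2])]
    have hT : T t u₀ = T (t - t₀) (T t₀ u₀) := by
      rw [← hcomp (t - t₀) t₀ (by linarith) h0, sub_add_cancel]
    rw [hu_eqS t ht, hsplit, hfirst, hT, hu_eqS t₀ h0, map_add, _root_.map_smul, smul_add]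
    abel
  have hkill : ∀ t : ℝ, T₀ ≤ t → ∀ Q : ℝ, 0 ≤ Q →
      (∀ s ∈ Set.Icc (t - T₀) t, ‖u s‖ ≤ Q) → ‖u t‖ ≤ ε * (K * ‖B‖ * T₀ * Q) := by
    intro t ht Q hQ hbd
    have ht0 : 0 ≤ t := le_trans hT₀pos.le ht
    have h1 := hrestart (t - T₀) t (by linarith) (by linarith)
    rw [show t - (t - T₀) = T₀ by ring, hnil] at h1
    rw [h1]
    simp only [ContinuousLinearMap.zero_apply, zero_add]
    rw [norm_smul, Real.norm_eq_abs, abs_of_pos hεpos]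
    have h2 : ∀ x ∈ Set.uIoc (t - T₀) t, ‖S (t - x) (B (u x))‖ ≤ K * ‖B‖ * Q := by
      intro s hs
      rw [Set.uIoc_of_le (by linarith)] at hs
      calc ‖S (t - s) (B (u s))‖ ≤ K * ‖B (u s)‖ := hSnorm _ _
        _ ≤ K * (‖B‖ * ‖u s‖) :=
            mul_le_mul_of_nonneg_left (B.le_opNorm (u s)) hKpos.le
        _ ≤ K * ‖B‖ * Q := by
            linarith [mul_le_mul_of_nonneg_left (hbd s ⟨hs.1.le, hs.2⟩)
              (mul_nonneg hKpos.le (norm_nonneg B))]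
    have h3 := intervalIntegral.norm_integral_le_of_norm_le_const h2
    have habs : |t - (t - T₀)| = T₀ := by
      rw [show t - (t - T₀) = T₀ by ring]; exact abs_of_pos hT₀pos
    rw [habs] at h3
    calc ε * ‖∫ s in (t - T₀)..t, S (t - s) (B (u s))‖
        ≤ ε * (K * ‖B‖ * Q * T₀) := mul_le_mul_of_nonneg_left h3 hεpos.le
      _ = ε * (K * ‖B‖ * T₀ * Q) := by ring
  have hbase : ∀ t : ℝ, t ∈ Set.Icc (0:ℝ) T₀ → ∀ Q : ℝ, 0 ≤ Q →
      (∀ s ∈ Set.Icc (0:ℝ) t, ‖u s‖ ≤ Q) →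
      ‖u t‖ ≤ K * ‖u₀‖ + ε * (K * ‖B‖ * T₀ * Q) := by
    intro t ht Q hQ hbd
    rw [hu_eqS t ht.1]
    apply le_trans (norm_add_le _ _)
    have h1 : ‖T t u₀‖ ≤ K * ‖u₀‖ := by rw [← hSeq t ht.1]; exact hSnorm t u₀
    have h2 : ∀ x ∈ Set.uIoc (0:ℝ) t, ‖S (t - x) (B (u x))‖ ≤ K * ‖B‖ * Q := by
      intro s hs
      rw [Set.uIoc_of_le ht.1] at hs
      calc ‖S (t - s) (B (u s))‖ ≤ K * ‖B (u s)‖ := hSnorm _ _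
        _ ≤ K * (‖B‖ * ‖u s‖) :=
            mul_le_mul_of_nonneg_left (B.le_opNorm (u s)) hKpos.le
        _ ≤ K * ‖B‖ * Q := by
            linarith [mul_le_mul_of_nonneg_left (hbd s ⟨hs.1.le, hs.2⟩)
              (mul_nonneg hKpos.le (norm_nonneg B))]
    have h3 := intervalIntegral.norm_integral_le_of_norm_le_const h2
    rw [sub_zero, abs_of_nonneg ht.1] at h3
    have h4 : ‖∫ s in (0:ℝ)..t, S (t - s) (B (u s))‖ ≤ K * ‖B‖ * T₀ * Q := by
      apply le_trans h3
      have h6 := mul_le_mul_of_nonneg_left ht.2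
        (mul_nonneg (mul_nonneg hKpos.le (norm_nonneg B)) hQ)
      linarith
    rw [norm_smul, Real.norm_eq_abs, abs_of_pos hεpos]
    have h5 : ε * ‖∫ s in (0:ℝ)..t, S (t - s) (B (u s))‖ ≤ ε * (K * ‖B‖ * T₀ * Q) :=
      mul_le_mul_of_nonneg_left h4 hεpos.le
    linarith
  -- maxima on the fundamental intervals
  have hmaxpt : ∀ n : ℕ, ∃ p ∈ Set.Icc ((n:ℝ) * T₀) ((n:ℝ) * T₀ + T₀),
      ∀ s ∈ Set.Icc ((n:ℝ) * T₀) ((n:ℝ) * T₀ + T₀), ‖u s‖ ≤ ‖u p‖ := by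
    intro n
    have hne : ((n:ℝ) * T₀) ≤ (n:ℝ) * T₀ + T₀ := by linarith
    obtain ⟨p, hp, hmax⟩ := isCompact_Icc.exists_isMaxOn (Set.nonempty_Icc.mpr hne)
      (hu_cont.norm.continuousOn)
    exact ⟨p, hp, fun s hs => hmax hs⟩
  choose c hc hcmax using hmaxpt
  have hm0 : ‖u (c 0)‖ ≤ 2 * (K * ‖u₀‖) := by
    have hc0 := hc 0
    have hcmax0 := hcmax 0
    simp only [Nat.cast_zero, zero_mul, zero_add] at hc0 hcmax0
    have hb := hbase (c 0) hc0 ‖u (c 0)‖ (norm_nonneg _)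
      (fun s hs => hcmax0 s ⟨hs.1, le_trans hs.2 hc0.2⟩)
    have h1 : ε * (K * ‖B‖ * T₀ * ‖u (c 0)‖) ≤ 2⁻¹ * ‖u (c 0)‖ := by
      have h2 : ε * (K * ‖B‖ * T₀) ≤ 2⁻¹ := le_trans hq hr2
      have h3 := mul_le_mul_of_nonneg_right h2 (norm_nonneg (u (c 0)))
      linarith
    linarith
  have hstep : ∀ n : ℕ, ‖u (c (n+1))‖ ≤ r * ‖u (c n)‖ := by
    intro n
    have hcn1 := hc (n + 1)
    have hcnm := hcmax (n + 1)
    push_cast at hcn1 hcnm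
    have hn0 : (0:ℝ) ≤ (n:ℝ) := Nat.cast_nonneg n
    have ht : T₀ ≤ c (n + 1) := le_trans
      (by have := mul_nonneg hn0 hT₀pos.le; linarith) hcn1.1
    have hQ0 : 0 ≤ max ‖u (c n)‖ ‖u (c (n+1))‖ := le_trans (norm_nonneg _) (le_max_left _ _)
    have hQbd : ∀ s ∈ Set.Icc (c (n+1) - T₀) (c (n+1)), ‖u s‖
        ≤ max ‖u (c n)‖ ‖u (c (n+1))‖ := by
      intro s hs
      rcases le_or_gt s ((n:ℝ) * T₀ + T₀) with h | h
      · refine le_trans (hcmax n s ⟨?_, h⟩) (le_max_left _ _)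
        linarith [hcn1.1, hs.1]
      · refine le_trans (hcnm s ⟨by linarith [h], by linarith [hs.2, hcn1.2]⟩)
          (le_max_right _ _)
    have h1 := hkill (c (n+1)) ht _ hQ0 hQbd
    have h2 : ‖u (c (n+1))‖ ≤ r * max ‖u (c n)‖ ‖u (c (n+1))‖ := by
      have h3 := mul_le_mul_of_nonneg_right hq hQ0
      linarith
    rcases le_total ‖u (c (n+1))‖ ‖u (c n)‖ with h | h
    · rw [max_eq_left h] at h2; exact h2
    · rw [max_eq_right h] at h2
      have h4 : ‖u (c (n+1))‖ ≤ 0 := by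
        linarith [h2, mul_le_mul_of_nonneg_right hr2 (norm_nonneg (u (c (n+1))))]
      have h5 : 0 ≤ r * ‖u (c n)‖ := mul_nonneg hrpos.le (norm_nonneg _)
      linarith
  have hmn : ∀ n : ℕ, ‖u (c n)‖ ≤ r ^ n * (2 * (K * ‖u₀‖)) := by
    intro n
    induction n with
    | zero => simpa using hm0
    | succ n ih =>
      calc ‖u (c (n+1))‖ ≤ r * ‖u (c n)‖ := hstep n
        _ ≤ r * (r ^ n * (2 * (K * ‖u₀‖))) := mul_le_mul_of_nonneg_left ih hrpos.le
        _ = r ^ (n+1) * (2 * (K * ‖u₀‖)) := by ring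
  have hubd : ∀ t : ℝ, 0 ≤ t → ∀ n : ℕ, (n:ℝ) * T₀ ≤ t → t ≤ (n:ℝ) * T₀ + T₀ →
      ‖u t‖ ≤ r ^ n * (2 * (K * ‖u₀‖)) :=
    fun t _ n h1 h2 => le_trans (hcmax n t ⟨h1, h2⟩) (hmn n)
  have hfinal : ∀ t : ℝ, 0 ≤ t →
      ‖u t‖ ≤ 2 * K * min 1 (Real.exp (-((2 * T₀)⁻¹ * Real.log ε⁻¹) * t) / ε) * ‖u₀‖ := by
    intro t ht
    set n : ℕ := ⌊t / T₀⌋₊ with hndef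
    have hn1 : (n:ℝ) ≤ t / T₀ := Nat.floor_le (by positivity)
    have hn2 : t / T₀ < (n:ℝ) + 1 := Nat.lt_floor_add_one _
    have h1 : (n:ℝ) * T₀ ≤ t := (le_div_iff₀ hT₀pos).mp hn1
    have h3 : t ≤ ((n:ℝ) + 1) * T₀ := by linarith [(div_lt_iff₀ hT₀pos).mp hn2]
    have hu1 := hubd t ht n h1 (by linarith)
    have hrn1 : r ^ n ≤ 1 := pow_le_one₀ hrpos.le (by linarith)
    rcases min_cases 1 (Real.exp (-((2 * T₀)⁻¹ * Real.log ε⁻¹) * t) / ε) with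
      ⟨hmin, _⟩ | ⟨hmin, _⟩
    · rw [hmin, mul_one]
      have h5 : ‖u t‖ ≤ 2 * (K * ‖u₀‖) := le_trans hu1
        (by have := mul_le_mul_of_nonneg_right hrn1
              (mul_nonneg hKpos.le (norm_nonneg u₀)); linarith)
      linarith
    · rw [hmin]
      have hrn : r ^ n ≤ Real.exp (-((2 * T₀)⁻¹ * Real.log ε⁻¹) * t) / ε := by
        have hlog : Real.log ε < 0 := Real.log_neg hεpos hε1
        have hRHS : Real.exp (-((2 * T₀)⁻¹ * Real.log ε⁻¹) * t) / ε
            = Real.exp (((2 * T₀)⁻¹ * t - 1) * Real.log ε) := by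
          rw [Real.log_inv, div_eq_mul_inv, show ε⁻¹ = Real.exp (-Real.log ε) by
            rw [Real.exp_neg, Real.exp_log hεpos], ← Real.exp_add]
          congr 1
          ring
        rw [hRHS, ← Real.log_le_iff_le_exp (by positivity)]
        rw [Real.log_pow, hrdef, Real.log_sqrt hεpos.le]
        have hcoef : (2 * T₀)⁻¹ * t - 1 ≤ (n:ℝ) / 2 := by
          have h4 : (2 * T₀)⁻¹ * t ≤ (2 * T₀)⁻¹ * (((n:ℝ) + 1) * T₀) :=
            mul_le_mul_of_nonneg_left h3 (by positivity)
          have h5 : (2 * T₀)⁻¹ * (((n:ℝ) + 1) * T₀) = ((n:ℝ) + 1) / 2 := by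
            field_simp
          rw [h5] at h4
          linarith
        linarith [mul_nonneg (sub_nonneg.mpr hcoef) (neg_nonneg.mpr hlog.le)]
      calc ‖u t‖ ≤ r ^ n * (2 * (K * ‖u₀‖)) := hu1
        _ ≤ (Real.exp (-((2 * T₀)⁻¹ * Real.log ε⁻¹) * t) / ε) * (2 * (K * ‖u₀‖)) :=
            mul_le_mul_of_nonneg_right hrn (by positivity)
        _ = 2 * K * (Real.exp (-((2 * T₀)⁻¹ * Real.log ε⁻¹) * t) / ε) * ‖u₀‖ := by ring
  refine ⟨⟨u, hu_cont.continuousOn, hu_eq, hfinal⟩, ?_⟩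
  -- uniqueness
  intro u1 v1 hu1c hu1e hv1c hv1e
  intro τ hτmem
  have hτ : (0:ℝ) ≤ τ := hτmem
  have hIIc : ∀ w : ℝ → H, ContinuousOn w (Set.Ici 0) → ∀ t : ℝ, 0 ≤ t →
      IntervalIntegrable (fun s => S (t - s) (B (w s))) volume 0 t := by
    intro w hw t ht
    apply ContinuousOn.intervalIntegrable
    rw [Set.uIcc_of_le ht]
    exact hIcont t w (hw.mono (fun s hs => hs.1))
  have heqS : ∀ w : ℝ → H, ContinuousOn w (Set.Ici 0) →
      (∀ t : ℝ, 0 ≤ t → w t = T t u₀ + ε • ∫ s in (0:ℝ)..t, T (t - s) (B (w s))) →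
      ∀ t : ℝ, 0 ≤ t → w t = T t u₀ + ε • ∫ s in (0:ℝ)..t, S (t - s) (B (w s)) := by
    intro w hw hwe t ht
    rw [hwe t ht]
    congr 2
    apply intervalIntegral.integral_congr
    intro s hs
    rw [Set.uIcc_of_le ht] at hs
    beta_reduce
    rw [hSeq (t - s) (by linarith [hs.2])]
  have hwc : ContinuousOn (fun s => u1 s - v1 s) (Set.Ici 0) := hu1c.sub hv1c
  have hdiffeq : ∀ t : ℝ, 0 ≤ t →
      u1 t - v1 t = ε • ∫ s in (0:ℝ)..t, S (t - s) (B (u1 s - v1 s)) := by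
    intro t ht
    rw [heqS u1 hu1c hu1e t ht, heqS v1 hv1c hv1e t ht]
    have h1 : (T t u₀ + ε • ∫ s in (0:ℝ)..t, S (t - s) (B (u1 s))) -
        (T t u₀ + ε • ∫ s in (0:ℝ)..t, S (t - s) (B (v1 s)))
        = ε • ((∫ s in (0:ℝ)..t, S (t - s) (B (u1 s)))
          - ∫ s in (0:ℝ)..t, S (t - s) (B (v1 s))) := by
      rw [smul_sub]; abel
    rw [h1, ← intervalIntegral.integral_sub (hIIc u1 hu1c t ht) (hIIc v1 hv1c t ht)]
    congr 1
    apply intervalIntegral.integral_congr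
    intro s _
    beta_reduce
    simp only [map_sub]
  set φ : ℝ → ℝ := fun s => Real.exp (-(lam * s)) * ‖u1 s - v1 s‖ with hφdef
  have hφcont : ContinuousOn φ (Set.Icc 0 τ) :=
    (Real.continuous_exp.comp (continuous_const.mul continuous_id).neg).continuousOn.mul
      ((hwc.mono (fun s hs => hs.1)).norm)
  obtain ⟨p, hp, hpmax⟩ := isCompact_Icc.exists_isMaxOn (Set.nonempty_Icc.mpr hτ) hφcont
  have hφnn : 0 ≤ φ p := mul_nonneg (Real.exp_pos _).le (norm_nonneg _)
  have hkey : φ p ≤ 2⁻¹ * φ p := by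
    have hp0 : (0:ℝ) ≤ p := hp.1
    have h2 : ‖u1 p - v1 p‖
        ≤ ε * (K * (‖B‖ * (Real.exp (lam * p) * φ p)) / lam) := by
      rw [hdiffeq p hp0, norm_smul, Real.norm_eq_abs, abs_of_pos hεpos]
      apply mul_le_mul_of_nonneg_left _ hεpos.le
      apply intBound2 p hp0 (fun s => u1 s - v1 s) (hwc.mono (fun s hs => hs.1))
        (Real.exp (lam * p) * φ p) (by positivity)
      intro s hs
      have h3 : ‖u1 s - v1 s‖ = Real.exp (lam * s) * φ s := by
        rw [hφdef]
        beta_reduce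
        rw [← mul_assoc, ← Real.exp_add, add_neg_cancel, Real.exp_zero, one_mul]
      have h4 : φ s ≤ φ p := hpmax ⟨hs.1, le_trans hs.2 hp.2⟩
      have h5 : Real.exp (lam * p) * Real.exp (-(lam * (p - s))) = Real.exp (lam * s) := by
        rw [← Real.exp_add]; congr 1; ring
      calc ‖u1 s - v1 s‖ = Real.exp (lam * s) * φ s := h3
        _ ≤ Real.exp (lam * s) * φ p := mul_le_mul_of_nonneg_left h4 (Real.exp_pos _).le
        _ = Real.exp (lam * p) * φ p * Real.exp (-(lam * (p - s))) := by rw [← h5]; ring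
    have h6 : ε * (K * ‖B‖) / lam ≤ 2⁻¹ := le_trans hcontr_const (by linarith)
    calc φ p = Real.exp (-(lam * p)) * ‖u1 p - v1 p‖ := rfl
      _ ≤ Real.exp (-(lam * p)) * (ε * (K * (‖B‖ * (Real.exp (lam * p) * φ p)) / lam)) :=
          mul_le_mul_of_nonneg_left h2 (Real.exp_pos _).le
      _ = (ε * (K * ‖B‖) / lam) * (Real.exp (-(lam * p)) * Real.exp (lam * p)) * φ p := by
          ring
      _ = (ε * (K * ‖B‖) / lam) * φ p := by
          rw [← Real.exp_add, neg_add_cancel, Real.exp_zero]; ring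
      _ ≤ 2⁻¹ * φ p := mul_le_mul_of_nonneg_right h6 hφnn
  have hφp0 : φ p = 0 := le_antisymm (by linarith) hφnn
  have h9 := hpmax (Set.right_mem_Icc.mpr hτ)
  have h10 : (0:ℝ) ≤ φ τ := mul_nonneg (Real.exp_pos _).le (norm_nonneg _)
  have h11 : φ τ = 0 := le_antisymm (by rw [← hφp0]; exact h9) h10
  have h12 : ‖u1 τ - v1 τ‖ = 0 := by
    rcases mul_eq_zero.mp h11 with h | h
    · exact absurd h (Real.exp_pos _).ne'
    · exact h
  exact sub_eq_zero.mp (norm_eq_zero.mp h12)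
end

section
/- Let c, L > 0. For every κ > c/L there exists ε₀ > 0 such that for every ε ∈ (0, ε₀) there exist a real number λ with λ > −κ ln(1/ε) and continuously differentiable functions u, v : [0,L] → ℝ, not both identically zero, satisfying u(0) = v(L) = 0 and the spectral system λ u(x) + c u'(x) = ε v(x), λ v(x) − c v'(x) = ε u(x) for all x ∈ [0,L]. (In particular λ is a real eigenvalue of the operator A + εB where A(u,v) = (−c∂ₓu, c∂ₓv) with domain {(u,v) ∈ H¹(0,L)² : u(0)=v(L)=0} and B(u,v) = (v,u), which yields the lower bound ‖e^{t(A+εB)}‖ ≥ K e^{−(κ ln(1/ε)) t} for the associated semigroup.) -/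
set_option maxHeartbeats 1000000


/-- For `c, L > 0` and any `κ > c/L` there is `ε₀ > 0` such that for
every `ε ∈ (0, ε₀)` there exist a real number `λ > −κ ln(1/ε)` and C¹ functions
`u, v` on `[0,L]`, not both identically zero, with `u 0 = v L = 0`, solving the
spectral system `λu + cu' = εv`, `λv − cv' = εu` on `[0,L]`. -/
theorem stmt1 (c L : ℝ) (hc : 0 < c) (hL : 0 < L) (κ : ℝ) (hκ : c / L < κ) :
    ∃ ε₀ : ℝ, 0 < ε₀ ∧ ∀ ε ∈ Set.Ioo (0:ℝ) ε₀,
      ∃ (lam : ℝ) (u v u' v' : ℝ → ℝ),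
        -κ * Real.log ε⁻¹ < lam ∧
        ContinuousOn u' (Set.Icc 0 L) ∧ ContinuousOn v' (Set.Icc 0 L) ∧
        (∀ x ∈ Set.Icc (0:ℝ) L, HasDerivAt u (u' x) x) ∧
        (∀ x ∈ Set.Icc (0:ℝ) L, HasDerivAt v (v' x) x) ∧
        ¬ ((∀ x ∈ Set.Icc (0:ℝ) L, u x = 0) ∧ (∀ x ∈ Set.Icc (0:ℝ) L, v x = 0)) ∧
        u 0 = 0 ∧ v L = 0 ∧
        (∀ x ∈ Set.Icc (0:ℝ) L,
          lam * u x + c * u' x = ε * v x ∧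
          lam * v x - c * v' x = ε * u x) := by
  have hκpos : 0 < κ := lt_trans (div_pos hc hL) hκ
  set δ : ℝ := (κ * L - c) / 2 with hδdef
  clear_value δ
  have hcκL : c < κ * L := (div_lt_iff₀ hL).mp hκ
  have hδ : 0 < δ := by simp only [hδdef]; linarith
  -- choose M large
  obtain ⟨M, hM0, hM1, hM2, hM3⟩ : ∃ M : ℝ, 0 < M ∧ 1 ≤ M * L ∧
      Real.exp (-(M * L)) < (δ / c) * (M * L) ∧
      κ * |Real.log (4 * c)| / M + 2 * κ / Real.sqrt M ≤ δ := by
    refine ⟨max (max (1 / L) (c / (δ * L)))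
      (max (2 * κ * |Real.log (4 * c)| / δ + 1) ((4 * κ / δ) ^ 2 + 1)), ?_, ?_, ?_, ?_⟩
    case _ =>
      exact lt_of_lt_of_le (by positivity) (le_trans (le_max_left _ _) (le_max_left _ _))
    all_goals
      set M : ℝ := max (max (1 / L) (c / (δ * L)))
        (max (2 * κ * |Real.log (4 * c)| / δ + 1) ((4 * κ / δ) ^ 2 + 1)) with hMdef
    all_goals
      have hM0 : 0 < M :=
        lt_of_lt_of_le (by positivity) (le_trans (le_max_left _ _) (le_max_left _ _))
    all_goals
      have hM1 : 1 ≤ M * L := by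
        have : 1 / L ≤ M := le_trans (le_max_left _ _) (le_max_left _ _)
        rw [div_le_iff₀ hL] at this; linarith [this]
    case _ => exact hM1
    case _ =>
      have h1 : Real.exp (-(M * L)) < 1 := by
        rw [Real.exp_lt_one_iff]; linarith
      have h2 : (1:ℝ) ≤ (δ / c) * (M * L) := by
        have : c / (δ * L) ≤ M := le_trans (le_max_right _ _) (le_max_left _ _)
        rw [div_le_iff₀ (by positivity)] at this
        rw [div_mul_eq_mul_div, le_div_iff₀ hc]
        nlinarith
      linarith
    case _ =>
      have hMa : 2 * κ * |Real.log (4 * c)| / δ ≤ M := by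
        have := le_trans (le_max_left _ _) (le_max_right _ _ :
          max (2 * κ * |Real.log (4 * c)| / δ + 1) ((4 * κ / δ) ^ 2 + 1) ≤ M)
        linarith
      have hMb : (4 * κ / δ) ^ 2 ≤ M := by
        have := le_trans (le_max_right _ _) (le_max_right _ _ :
          max (2 * κ * |Real.log (4 * c)| / δ + 1) ((4 * κ / δ) ^ 2 + 1) ≤ M)
        linarith
      have hsM : 4 * κ / δ ≤ Real.sqrt M := by
        rw [show (4 * κ / δ) = Real.sqrt ((4 * κ / δ) ^ 2) from
          (Real.sqrt_sq (by positivity)).symm]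
        exact Real.sqrt_le_sqrt hMb
      have h1 : κ * |Real.log (4 * c)| / M ≤ δ / 2 := by
        rw [div_le_iff₀ hM0]
        have h := hMa
        rw [div_le_iff₀ hδ] at h
        nlinarith [abs_nonneg (Real.log (4 * c))]
      have h2 : 2 * κ / Real.sqrt M ≤ δ / 2 := by
        have hsM0 : 0 < Real.sqrt M := Real.sqrt_pos.mpr hM0
        have h := hsM
        rw [div_le_iff₀ hδ] at h
        rw [div_le_iff₀ hsM0]
        nlinarith
      linarith
  have hsML : 0 < Real.sinh (M * L) := Real.sinh_pos_iff.mpr (by linarith)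
  refine ⟨c * M / Real.sinh (M * L), by positivity, ?_⟩
  rintro ε ⟨hε, hεlt⟩
  -- find μ ≥ M with ε * sinh (μ L) = c μ via IVT
  set g : ℝ → ℝ := fun μ => ε * Real.sinh (μ * L) - c * μ with hgdef
  clear_value g
  have hgM : g M < 0 := by
    have : ε * Real.sinh (M * L) < c * M := by
      rw [lt_div_iff₀ hsML] at hεlt; linarith
    simp only [hgdef]; linarith
  obtain ⟨X, hMX, hgX⟩ : ∃ X : ℝ, M ≤ X ∧ 0 < g X := by
    refine ⟨max M (max (3 / L) (16 * c / (ε * L ^ 2))), le_max_left _ _, ?_⟩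
    set X : ℝ := max M (max (3 / L) (16 * c / (ε * L ^ 2))) with hXdef
    have hX3 : 3 ≤ X * L := by
      have : 3 / L ≤ X := le_trans (le_max_left _ _) (le_max_right _ _)
      rw [div_le_iff₀ hL] at this; linarith
    have hX0 : 0 < X := by nlinarith
    have hX16 : 16 * c / (ε * L ^ 2) ≤ X := le_trans (le_max_right _ _) (le_max_right _ _)
    have hexp : (X * L) ^ 2 / 4 ≤ Real.exp (X * L) := by
      have h := Real.add_one_le_exp (X * L / 2)
      have h2 : Real.exp (X * L) = (Real.exp (X * L / 2)) ^ 2 := by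
        rw [sq, ← Real.exp_add]; congr 1; ring
      nlinarith [Real.exp_pos (X * L / 2)]
    have hsinh : ((X * L) ^ 2 / 4 - 1) / 2 ≤ Real.sinh (X * L) := by
      rw [Real.sinh_eq]
      have : Real.exp (-(X * L)) ≤ 1 := Real.exp_le_one_iff.mpr (by linarith)
      linarith
    have h16 : 16 * c ≤ X * (ε * L ^ 2) := by
      rw [div_le_iff₀ (by positivity)] at hX16; linarith
    have e1 : c * X ≤ ε * X ^ 2 * L ^ 2 / 16 := by
      nlinarith [mul_le_mul_of_nonneg_left h16 hX0.le]
    have hXL2 : 9 ≤ (X * L) ^ 2 := by nlinarith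
    have e2 : 9 * ε ≤ ε * X ^ 2 * L ^ 2 := by
      nlinarith [mul_le_mul_of_nonneg_left hXL2 hε.le]
    have hkey : c * X < ε * (((X * L) ^ 2 / 4 - 1) / 2) := by nlinarith [e1, e2]
    simp only [hgdef]
    linarith [mul_le_mul_of_nonneg_left hsinh (le_of_lt hε), hkey]
  have hgcont : ContinuousOn g (Set.Icc M X) :=
    (Continuous.continuousOn (by continuity))
  obtain ⟨μ, hμmem, hgμ⟩ := intermediate_value_Icc hMX hgcont
    ⟨le_of_lt hgM, le_of_lt hgX⟩
  have hμM : M ≤ μ := hμmem.1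
  have hμ0 : 0 < μ := lt_of_lt_of_le hM0 hμM
  set s : ℝ := μ * L with hsdef
  clear_value s
  have hs1 : 1 ≤ s := le_trans hM1 (by simp only [hsdef]; nlinarith)
  have hsML_le : M * L ≤ s := by simp only [hsdef]; nlinarith
  have hS : 0 < Real.sinh s := Real.sinh_pos_iff.mpr (by linarith)
  have key : ε * Real.sinh s = c * μ := by
    have h := hgμ
    rw [hgdef] at h
    simp only at h
    rw [hsdef]; linarith
  set lam : ℝ := -(c * μ * Real.cosh s / Real.sinh s) with hlamdef
  clear_value lam
  have hlam_sinh : lam * Real.sinh s = -(c * μ * Real.cosh s) := by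
    simp only [hlamdef]; field_simp
  have hlam2 : lam ^ 2 - c ^ 2 * μ ^ 2 = ε ^ 2 := by
    have hcosh_sq : Real.cosh s ^ 2 = Real.sinh s ^ 2 + 1 := Real.cosh_sq s
    have h1 : lam ^ 2 * Real.sinh s ^ 2 = c ^ 2 * μ ^ 2 * Real.cosh s ^ 2 := by
      linear_combination (lam * Real.sinh s - c * μ * Real.cosh s) * hlam_sinh
    have h2 : ε ^ 2 * Real.sinh s ^ 2 = c ^ 2 * μ ^ 2 := by
      linear_combination (ε * Real.sinh s + c * μ) * key
    have h3 : (lam ^ 2 - c ^ 2 * μ ^ 2 - ε ^ 2) * Real.sinh s ^ 2 = 0 := by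
      linear_combination h1 - h2 + c ^ 2 * μ ^ 2 * hcosh_sq
    have h4 := (mul_eq_zero.mp h3).resolve_right (pow_ne_zero _ hS.ne')
    linarith
  refine ⟨lam, fun x => Real.sinh (μ * x),
    fun x => (lam * Real.sinh (μ * x) + c * μ * Real.cosh (μ * x)) / ε,
    fun x => μ * Real.cosh (μ * x),
    fun x => (lam * μ * Real.cosh (μ * x) + c * μ ^ 2 * Real.sinh (μ * x)) / ε,
    ?_, ?_, ?_, ?_, ?_, ?_, ?_, ?_, ?_⟩
  · -- eigenvalue lower bound
    have hεeq : ε = c * μ / Real.sinh s := by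
      field_simp; linarith [key]
    have hlog : Real.log ε⁻¹ = Real.log (Real.sinh s) - Real.log (c * μ) := by
      rw [hεeq, Real.log_inv, Real.log_div (by positivity) (ne_of_gt hS)]
      ring
    -- Claim B : log sinh s ≥ s - log 4
    have hsinh_ge : Real.exp s / 4 ≤ Real.sinh s := by
      rw [Real.sinh_eq]
      have h1 : Real.exp (-s) ≤ 1 := Real.exp_le_one_iff.mpr (by linarith)
      have h2 : (2:ℝ) ≤ Real.exp s := by
        have := Real.add_one_le_exp 1
        have := Real.exp_le_exp.mpr hs1
        linarith
      linarith
    have hlogsinh : s - Real.log 4 ≤ Real.log (Real.sinh s) := by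
      have := Real.log_le_log (by positivity) hsinh_ge
      rw [Real.log_div (by positivity) (by norm_num), Real.log_exp] at this
      linarith
    have hlog4 : Real.log (4 * c * μ) = Real.log 4 + Real.log (c * μ) := by
      rw [show (4 * c * μ) = 4 * (c * μ) by ring,
        Real.log_mul (by norm_num) (by positivity)]
    have hB : s - Real.log (4 * c * μ) ≤ Real.log ε⁻¹ := by
      rw [hlog, hlog4]; linarith
    -- Claim C : κ log(4 c μ) ≤ δ μ
    have hC : κ * Real.log (4 * c * μ) ≤ δ * μ := by
      have hsplit : Real.log (4 * c * μ) = Real.log (4 * c) + Real.log μ := by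
        rw [show (4 * c * μ) = (4 * c) * μ by ring,
          Real.log_mul (by positivity) (ne_of_gt hμ0)]
      have hlogμ : Real.log μ ≤ 2 * Real.sqrt μ := by
        have h1 : Real.log (Real.sqrt μ) = Real.log μ / 2 := Real.log_sqrt (le_of_lt hμ0)
        have h2 : Real.log (Real.sqrt μ) ≤ Real.sqrt μ - 1 :=
          Real.log_le_sub_one_of_pos (Real.sqrt_pos.mpr hμ0)
        nlinarith [Real.sqrt_nonneg μ]
      have hsqrtμ : Real.sqrt μ ≤ μ / Real.sqrt M := by
        have hsM0 : 0 < Real.sqrt M := Real.sqrt_pos.mpr hM0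
        have h1 : Real.sqrt M ≤ Real.sqrt μ := Real.sqrt_le_sqrt hμM
        rw [le_div_iff₀ hsM0]
        nlinarith [Real.sq_sqrt (le_of_lt hμ0), Real.sqrt_nonneg μ]
      have habs : Real.log (4 * c) ≤ |Real.log (4 * c)| := le_abs_self _
      have h1 : κ * |Real.log (4 * c)| ≤ (κ * |Real.log (4 * c)| / M) * μ := by
        rw [div_mul_eq_mul_div, le_div_iff₀ hM0]
        have : 0 ≤ κ * |Real.log (4 * c)| := by positivity
        nlinarith
      have h2 : 2 * κ * Real.sqrt μ ≤ (2 * κ / Real.sqrt M) * μ := by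
        have hsM0 : 0 < Real.sqrt M := Real.sqrt_pos.mpr hM0
        rw [div_mul_eq_mul_div, le_div_iff₀ hsM0]
        have hμeq : Real.sqrt μ * Real.sqrt μ = μ := Real.mul_self_sqrt hμ0.le
        have hle : Real.sqrt M ≤ Real.sqrt μ := Real.sqrt_le_sqrt hμM
        have base : Real.sqrt μ * Real.sqrt M ≤ μ := by
          calc Real.sqrt μ * Real.sqrt M ≤ Real.sqrt μ * Real.sqrt μ :=
                mul_le_mul_of_nonneg_left hle (Real.sqrt_nonneg μ)
            _ = μ := hμeq
        calc 2 * κ * Real.sqrt μ * Real.sqrt M = 2 * κ * (Real.sqrt μ * Real.sqrt M) := by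
              ring
          _ ≤ 2 * κ * μ := mul_le_mul_of_nonneg_left base (by positivity)
      have hmul : (κ * |Real.log (4 * c)| / M + 2 * κ / Real.sqrt M) * μ ≤ δ * μ :=
        mul_le_mul_of_nonneg_right hM3 (le_of_lt hμ0)
      have hκlog : κ * Real.log (4 * c * μ) ≤
          κ * |Real.log (4 * c)| + 2 * κ * Real.sqrt μ := by
        rw [hsplit]
        have e1 := mul_le_mul_of_nonneg_left hlogμ hκpos.le
        have e2 := mul_le_mul_of_nonneg_left habs hκpos.le
        have : κ * (Real.log (4 * c) + Real.log μ) =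
            κ * Real.log (4 * c) + κ * Real.log μ := by ring
        linarith [e1, e2]
      linarith
    -- Claim A : cosh s < (1 + δ/c) sinh s
    have hA : c * μ * Real.cosh s < (c + δ) * μ * Real.sinh s := by
      have hdiff : Real.cosh s - Real.sinh s = Real.exp (-s) := Real.cosh_sub_sinh s
      have h1 : Real.exp (-s) ≤ Real.exp (-(M * L)) := Real.exp_le_exp.mpr (by linarith)
      have h2 : M * L ≤ Real.sinh s := le_trans hsML_le (le_trans le_rfl (Real.self_le_sinh_iff.mpr (by linarith)))
      have h3 : Real.exp (-s) < (δ / c) * Real.sinh s := by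
        have := mul_le_mul_of_nonneg_left h2 (le_of_lt (div_pos hδ hc))
        calc Real.exp (-s) ≤ Real.exp (-(M * L)) := h1
          _ < (δ / c) * (M * L) := hM2
          _ ≤ (δ / c) * Real.sinh s := this
      have hcosh_lt : Real.cosh s < (1 + δ / c) * Real.sinh s := by
        have : (1 + δ / c) * Real.sinh s = Real.sinh s + (δ / c) * Real.sinh s := by ring
        linarith [hdiff, h3]
      have := mul_lt_mul_of_pos_left hcosh_lt (by positivity : (0:ℝ) < c * μ)
      have hcd : c * μ * ((1 + δ / c) * Real.sinh s) = (c + δ) * μ * Real.sinh s := by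
        field_simp
      linarith [hcd ▸ this]
    -- conclude
    have hfin : c * μ * Real.cosh s / Real.sinh s < κ * Real.log ε⁻¹ := by
      rw [div_lt_iff₀ hS]
      have hκB : κ * (s - Real.log (4 * c * μ)) ≤ κ * Real.log ε⁻¹ :=
        mul_le_mul_of_nonneg_left hB (le_of_lt hκpos)
      have hκs : κ * s = (c + 2 * δ) * μ := by
        simp only [hsdef, hδdef]; ring
      have hκBexp : κ * s - κ * Real.log (4 * c * μ) ≤ κ * Real.log ε⁻¹ := by
        have : κ * (s - Real.log (4 * c * μ)) =
            κ * s - κ * Real.log (4 * c * μ) := by ring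
        linarith [hκB]
      have h4 : (c + δ) * μ ≤ κ * Real.log ε⁻¹ := by linarith [hκBexp, hκs, hC]
      linarith [hA, mul_le_mul_of_nonneg_right h4 (le_of_lt hS)]
    simp only [hlamdef]
    linarith
  · exact Continuous.continuousOn (by fun_prop)
  · exact Continuous.continuousOn (by fun_prop)
  · intro x _
    have h := (Real.hasDerivAt_sinh (μ * x)).comp x ((hasDerivAt_id x).const_mul μ)
    exact h.congr_deriv (by ring)
  · intro x _
    have hsinh := (Real.hasDerivAt_sinh (μ * x)).comp x ((hasDerivAt_id x).const_mul μ)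
    have hcosh := (Real.hasDerivAt_cosh (μ * x)).comp x ((hasDerivAt_id x).const_mul μ)
    have h := ((hsinh.const_mul lam).add (hcosh.const_mul (c * μ))).div_const ε
    exact h.congr_deriv (by ring)
  · rintro ⟨hu, -⟩
    have := hu L ⟨le_of_lt hL, le_refl L⟩
    have hsL : 0 < Real.sinh (μ * L) := hsdef ▸ hS
    simp only at this
    linarith
  · simp
  · show (lam * Real.sinh (μ * L) + c * μ * Real.cosh (μ * L)) / ε = 0
    rw [← hsdef] at *
    rw [hlam_sinh]
    simp [div_eq_zero_iff]
  · intro x _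
    constructor
    · field_simp
    · have hnum : lam * (lam * Real.sinh (μ * x) + c * μ * Real.cosh (μ * x)) -
          c * (lam * μ * Real.cosh (μ * x) + c * μ ^ 2 * Real.sinh (μ * x)) =
          ε ^ 2 * Real.sinh (μ * x) := by
        linear_combination Real.sinh (μ * x) * hlam2
      field_simp
      linear_combination hnum
end

section
/- Let λ, μ, f, g : ℝ² → ℝ be of class C², let (ū, v̄) ∈ ℝ² with λ(ū,v̄) > 0 and μ(ū,v̄) > 0, and let c > 0, R > 0 be such that inf(λ(u,v), μ(u,v)) ≥ c whenever ‖(u,v) − (ū,v̄)‖ ≤ 2R. Then there exist ε₀ > 0 and a map ε ∈ [−ε₀, ε₀] ↦ (ū_ε, v̄_ε), continuously differentiable as a map into the Banach space C⁰([0,L], ℝ²) with the sup norm, such that (ū₀, v̄₀) = (ū, v̄) (the constant functions), sup_{x∈[0,L]} ‖(ū_ε(x), v̄_ε(x)) − (ū, v̄)‖ < R for every ε, and for each ε the functions ū_ε, v̄_ε are of class C¹ on [0,L] and satisfy λ(ū_ε, v̄_ε) ∂ₓū_ε = ε f(ū_ε, v̄_ε), −μ(ū_ε, v̄_ε) ∂ₓv̄_ε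 = ε g(ū_ε, v̄_ε) on [0,L], with ū_ε(0) = ū and v̄_ε(L) = v̄. -/
open Set Metric Topology Filter MeasureTheory intervalIntegral Asymptotics

noncomputable section Stmt3Aux

variable {K : Type*} [TopologicalSpace K] [CompactSpace K]

def evalLM (A : C(K, (ℝ×ℝ) →L[ℝ] (ℝ×ℝ))) : C(K, ℝ×ℝ) →ₗ[ℝ] C(K, ℝ×ℝ) where
  toFun h := ⟨fun x => A x (h x), (map_continuous A).clm_apply (map_continuous h)⟩
  map_add' h₁ h₂ := ContinuousMap.ext fun x => by simp
  map_smul' r h := ContinuousMap.ext fun x => by simp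

lemma evalLM_bound (A : C(K, (ℝ×ℝ) →L[ℝ] (ℝ×ℝ))) (h : C(K, ℝ×ℝ)) :
    ‖evalLM A h‖ ≤ ‖A‖ * ‖h‖ := by
  apply (ContinuousMap.norm_le _ (mul_nonneg (norm_nonneg A) (norm_nonneg h))).mpr
  intro x
  calc ‖A x (h x)‖ ≤ ‖A x‖ * ‖h x‖ := (A x).le_opNorm _
  _ ≤ ‖A‖ * ‖h‖ := by
    gcongr
    · exact A.norm_coe_le_norm x
    · exact h.norm_coe_le_norm x

def evalCLM (A : C(K, (ℝ×ℝ) →L[ℝ] (ℝ×ℝ))) : C(K, ℝ×ℝ) →L[ℝ] C(K, ℝ×ℝ) :=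
  LinearMap.mkContinuous (evalLM A) ‖A‖ (evalLM_bound A)

@[simp] lemma evalCLM_apply (A : C(K, (ℝ×ℝ) →L[ℝ] (ℝ×ℝ))) (h : C(K, ℝ×ℝ)) (x : K) :
    evalCLM A h x = A x (h x) := rfl

lemma evalCLM_norm_le (A : C(K, (ℝ×ℝ) →L[ℝ] (ℝ×ℝ))) : ‖evalCLM A‖ ≤ ‖A‖ :=
  LinearMap.mkContinuous_norm_le (evalLM A) (norm_nonneg A) (evalLM_bound A)

lemma evalCLM_sub (A B : C(K, (ℝ×ℝ) →L[ℝ] (ℝ×ℝ))) :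
    evalCLM A - evalCLM B = evalCLM (A - B) := by
  refine ContinuousLinearMap.ext fun h => ContinuousMap.ext fun x => ?_
  show evalCLM A h x - evalCLM B h x = _
  simp

/-- The Nemytskii (superposition) operator on `C(K, ℝ×ℝ)`. -/
def nem (F : (ℝ×ℝ) → (ℝ×ℝ)) (hF : Continuous F) (w : C(K, ℝ×ℝ)) : C(K, ℝ×ℝ) :=
  ⟨fun x => F (w x), hF.comp (map_continuous w)⟩

@[simp] lemma nem_apply (F : (ℝ×ℝ) → (ℝ×ℝ)) (hF : Continuous F) (w : C(K, ℝ×ℝ)) (x : K) :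
    nem F hF w x = F (w x) := rfl

/-- Composition with the derivative, as a map into `C(K, ...)`. -/
def dnem (F : (ℝ×ℝ) → (ℝ×ℝ)) (hF : Continuous (fderiv ℝ F)) (w : C(K, ℝ×ℝ)) :
    C(K, (ℝ×ℝ) →L[ℝ] (ℝ×ℝ)) :=
  ⟨fun x => fderiv ℝ F (w x), hF.comp (map_continuous w)⟩

theorem nem_contDiff {F : (ℝ×ℝ) → (ℝ×ℝ)} (hF : ContDiff ℝ 1 F)
    (hFc : HasCompactSupport F) :
    ContDiff ℝ 1 (nem F hF.continuous : C(K, ℝ×ℝ) → C(K, ℝ×ℝ)) := by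
  have hDFcont : Continuous (fderiv ℝ F) := hF.continuous_fderiv one_ne_zero
  have hDFuc : UniformContinuous (fderiv ℝ F) :=
    (hFc.fderiv ℝ).uniformContinuous_of_continuous hDFcont
  have hdiff : ∀ w : C(K, ℝ×ℝ), HasFDerivAt (nem F hF.continuous)
      (evalCLM (dnem F hDFcont w)) w := by
    intro w
    rw [hasFDerivAt_iff_isLittleO_nhds_zero]
    rw [Asymptotics.isLittleO_iff]
    intro ε hε
    rcases Metric.uniformContinuous_iff.1 hDFuc ε hε with ⟨δ, hδ, hδ'⟩
    filter_upwards [Metric.ball_mem_nhds (0 : C(K, ℝ×ℝ)) hδ] with h hh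
    rw [mem_ball_zero_iff] at hh
    have key : ∀ x : K, ‖F (w x + h x) - F (w x) - fderiv ℝ F (w x) (h x)‖ ≤ ε * ‖h‖ := by
      intro x
      have hsub : ∀ z ∈ closedBall (w x) ‖h‖, ‖fderiv ℝ F z - fderiv ℝ F (w x)‖ ≤ ε := by
        intro z hz
        have : dist z (w x) < δ := lt_of_le_of_lt (mem_closedBall.1 hz) hh
        have h' := hδ' this
        rw [dist_eq_norm] at h'
        exact le_of_lt h'
      have := (convex_closedBall (w x) ‖h‖).norm_image_sub_le_of_norm_fderiv_le'
        (fun z _ => hF.differentiable one_ne_zero z) hsub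
        (mem_closedBall_self (norm_nonneg h))
        (by
          rw [mem_closedBall, dist_self_add_left]
          exact h.norm_coe_le_norm x)
      have h2 := this
      rw [add_sub_cancel_left] at h2
      calc ‖F (w x + h x) - F (w x) - fderiv ℝ F (w x) (h x)‖ ≤ ε * ‖h x‖ := h2
      _ ≤ ε * ‖h‖ := by gcongr; exact h.norm_coe_le_norm x
    apply (ContinuousMap.norm_le _ (mul_nonneg hε.le (norm_nonneg h))).mpr
    intro x
    simpa [nem, dnem, ContinuousMap.sub_apply, ContinuousMap.add_apply] using key x
  have hfd : fderiv ℝ (nem F hF.continuous : C(K, ℝ×ℝ) → C(K, ℝ×ℝ))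
      = fun w => evalCLM (dnem F hDFcont w) := funext fun w => (hdiff w).fderiv
  rw [contDiff_one_iff_fderiv]
  refine ⟨fun w => (hdiff w).differentiableAt, ?_⟩
  rw [hfd]
  rw [Metric.continuous_iff]
  intro w ε hε
  rcases Metric.uniformContinuous_iff.1 hDFuc (ε/2) (by positivity) with ⟨δ, hδ, hδ'⟩
  refine ⟨δ, hδ, fun w' hw' => ?_⟩
  rw [dist_eq_norm, evalCLM_sub]
  calc ‖evalCLM (dnem F hDFcont w' - dnem F hDFcont w)‖
      ≤ ‖dnem F hDFcont w' - dnem F hDFcont w‖ := evalCLM_norm_le _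
  _ ≤ ε/2 := by
      apply (ContinuousMap.norm_le _ (by positivity)).mpr
      intro x
      have : dist (w' x) (w x) < δ := lt_of_le_of_lt (ContinuousMap.dist_apply_le_dist x) hw'
      have := hδ' this
      rw [dist_eq_norm] at this
      exact le_of_lt this
  _ < ε := by linarith

end Stmt3Aux
noncomputable section Stmt3Aux2

def bu (ubar R : ℝ) (hR : 0 < R) : ContDiffBump ubar := ⟨R, 2*R, hR, by linarith⟩

def Ftc (lam mu f g : ℝ → ℝ → ℝ) (ubar vbar R : ℝ) (hR : 0 < R) : ℝ×ℝ → ℝ×ℝ := fun p =>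
  (bu ubar R hR p.1 * bu vbar R hR p.2) •
    (f p.1 p.2 / lam p.1 p.2, g p.1 p.2 / mu p.1 p.2)

variable {lam mu f g : ℝ → ℝ → ℝ} {ubar vbar c R : ℝ}

lemma dist_pair (p : ℝ×ℝ) : dist p (ubar, vbar) = ‖(p.1 - ubar, p.2 - vbar)‖ := by
  rw [Prod.dist_eq, Prod.norm_def]
  simp [Real.dist_eq, Real.norm_eq_abs]

lemma Ftc_zero (hR : 0 < R) (p : ℝ×ℝ) (hp : p ∉ closedBall ((ubar, vbar) : ℝ×ℝ) (2*R)) :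
    Ftc lam mu f g ubar vbar R hR p = 0 := by
  rw [mem_closedBall, Prod.dist_eq, not_le] at hp
  have hz : bu ubar R hR p.1 * bu vbar R hR p.2 = 0 := by
    rcases lt_max_iff.1 hp with h | h
    · have : p.1 ∉ Function.support (bu ubar R hR) := by
        rw [(bu ubar R hR).support_eq]
        simpa [bu, mem_ball, Real.dist_eq] using not_lt.2 h.le
      rw [Function.notMem_support.1 this, zero_mul]
    · have : p.2 ∉ Function.support (bu vbar R hR) := by
        rw [(bu vbar R hR).support_eq]
        simpa [bu, mem_ball, Real.dist_eq] using not_lt.2 h.le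
      rw [Function.notMem_support.1 this, mul_zero]
  rw [Ftc, hz, zero_smul]

lemma Ftc_supp (hR : 0 < R) : HasCompactSupport (Ftc lam mu f g ubar vbar R hR) :=
  HasCompactSupport.intro (isCompact_closedBall _ _) (Ftc_zero hR)

lemma Ftc_eq (hR : 0 < R) (hc : 0 < c)
    (hcR : ∀ u v : ℝ, ‖(u - ubar, v - vbar)‖ ≤ 2 * R → c ≤ min (lam u v) (mu u v))
    (p : ℝ×ℝ) (hp : dist p (ubar, vbar) ≤ R) :
    Ftc lam mu f g ubar vbar R hR p = (f p.1 p.2 / lam p.1 p.2, g p.1 p.2 / mu p.1 p.2)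
      ∧ c ≤ lam p.1 p.2 ∧ c ≤ mu p.1 p.2 := by
  have h2 : dist p (ubar, vbar) ≤ 2 * R := le_trans hp (by linarith)
  rw [dist_pair] at h2
  have hlm := hcR p.1 p.2 h2
  refine ⟨?_, (le_min_iff.1 hlm).1, (le_min_iff.1 hlm).2⟩
  rw [Prod.dist_eq, max_le_iff] at hp
  have h1 : bu ubar R hR p.1 = 1 :=
    (bu ubar R hR).one_of_mem_closedBall (by simpa [bu, mem_closedBall] using hp.1)
  have hh2 : bu vbar R hR p.2 = 1 :=
    (bu vbar R hR).one_of_mem_closedBall (by simpa [bu, mem_closedBall] using hp.2)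
  rw [Ftc, h1, hh2, one_mul, one_smul]

lemma Ftc_smooth (hR : 0 < R) (hc : 0 < c)
    (hlam : ContDiff ℝ 2 fun p : ℝ × ℝ => lam p.1 p.2)
    (hmu : ContDiff ℝ 2 fun p : ℝ × ℝ => mu p.1 p.2)
    (hf : ContDiff ℝ 2 fun p : ℝ × ℝ => f p.1 p.2)
    (hg : ContDiff ℝ 2 fun p : ℝ × ℝ => g p.1 p.2)
    (hcR : ∀ u v : ℝ, ‖(u - ubar, v - vbar)‖ ≤ 2 * R → c ≤ min (lam u v) (mu u v)) :
    ContDiff ℝ 1 (Ftc lam mu f g ubar vbar R hR) := by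
  set S : Set (ℝ×ℝ) := {p | lam p.1 p.2 ≠ 0 ∧ mu p.1 p.2 ≠ 0} with hSdef
  have hSopen : IsOpen S := by
    have h1 : IsOpen {p : ℝ×ℝ | lam p.1 p.2 ≠ 0} :=
      isOpen_compl_singleton.preimage (hlam.continuous)
    have h2 : IsOpen {p : ℝ×ℝ | mu p.1 p.2 ≠ 0} :=
      isOpen_compl_singleton.preimage (hmu.continuous)
    exact h1.inter h2
  have hchi : ContDiff ℝ 1 fun p : ℝ×ℝ => bu ubar R hR p.1 * bu vbar R hR p.2 :=
    (((bu ubar R hR).contDiff).comp contDiff_fst).mul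
      (((bu vbar R hR).contDiff).comp contDiff_snd)
  have hS : ContDiffOn ℝ 1 (Ftc lam mu f g ubar vbar R hR) S := by
    apply (hchi.contDiffOn).smul
    apply ContDiffOn.prodMk
    · exact ((hf.of_le one_le_two).contDiffOn).div ((hlam.of_le one_le_two).contDiffOn)
        fun p hp => hp.1
    · exact ((hg.of_le one_le_two).contDiffOn).div ((hmu.of_le one_le_two).contDiffOn)
        fun p hp => hp.2
  rw [contDiff_iff_contDiffAt]
  intro p
  by_cases hp : p ∈ closedBall ((ubar, vbar) : ℝ×ℝ) (2*R)
  · have hpS : p ∈ S := by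
      rw [mem_closedBall, dist_pair] at hp
      have := hcR p.1 p.2 hp
      exact ⟨by nlinarith [(le_min_iff.1 this).1], by nlinarith [(le_min_iff.1 this).2]⟩
    exact hS.contDiffAt (hSopen.mem_nhds hpS)
  · have hopen : IsOpen (closedBall ((ubar, vbar) : ℝ×ℝ) (2*R))ᶜ :=
      (isClosed_closedBall).isOpen_compl
    have hzero : ContDiffOn ℝ 1 (fun _ : ℝ×ℝ => (0 : ℝ×ℝ))
        (closedBall ((ubar, vbar) : ℝ×ℝ) (2*R))ᶜ := contDiffOn_const
    refine (hzero.congr ?_).contDiffAt (hopen.mem_nhds hp)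
    intro q hq
    exact Ftc_zero hR q hq

end Stmt3Aux2
noncomputable section Stmt3Aux3

variable {L : ℝ}

lemma cont_comp_projIcc (hL : 0 ≤ L) (w : C(Icc (0:ℝ) L, ℝ×ℝ)) :
    Continuous fun s : ℝ => w (projIcc 0 L hL s) :=
  (map_continuous w).comp continuous_projIcc

lemma cont_primitive1 (hL : 0 ≤ L) (w : C(Icc (0:ℝ) L, ℝ×ℝ)) :
    Continuous fun x : Icc (0:ℝ) L => ∫ s in (0:ℝ)..(x:ℝ), (w (projIcc 0 L hL s)).1 := by
  have h : Continuous fun s : ℝ => (w (projIcc 0 L hL s)).1 :=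
    (cont_comp_projIcc hL w).fst
  exact (intervalIntegral.continuous_primitive
    (fun a b => h.intervalIntegrable a b) 0).comp continuous_subtype_val

lemma integral_right_eq (hL : 0 ≤ L) (ψ : ℝ → ℝ) (hψ : Continuous ψ) (x : ℝ) :
    (∫ s in x..L, ψ s) = (∫ s in (0:ℝ)..L, ψ s) - ∫ s in (0:ℝ)..x, ψ s := by
  rw [eq_sub_iff_add_eq, add_comm]
  exact intervalIntegral.integral_add_adjacent_intervals
    (hψ.intervalIntegrable 0 x) (hψ.intervalIntegrable x L)

lemma cont_primitive2 (hL : 0 ≤ L) (w : C(Icc (0:ℝ) L, ℝ×ℝ)) :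
    Continuous fun x : Icc (0:ℝ) L => ∫ s in (x:ℝ)..L, (w (projIcc 0 L hL s)).2 := by
  have h : Continuous fun s : ℝ => (w (projIcc 0 L hL s)).2 :=
    (cont_comp_projIcc hL w).snd
  have heq : (fun x : Icc (0:ℝ) L => ∫ s in (x:ℝ)..L, (w (projIcc 0 L hL s)).2)
      = fun x : Icc (0:ℝ) L => (∫ s in (0:ℝ)..L, (w (projIcc 0 L hL s)).2)
        - ∫ s in (0:ℝ)..(x:ℝ), (w (projIcc 0 L hL s)).2 := by
    funext x
    exact integral_right_eq hL _ h _
  rw [heq]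
  exact continuous_const.sub ((intervalIntegral.continuous_primitive
    (fun a b => h.intervalIntegrable a b) 0).comp continuous_subtype_val)

def intLM (hL : 0 ≤ L) : C(Icc (0:ℝ) L, ℝ×ℝ) →ₗ[ℝ] C(Icc (0:ℝ) L, ℝ×ℝ) where
  toFun w := ⟨fun x => ((∫ s in (0:ℝ)..(x:ℝ), (w (projIcc 0 L hL s)).1),
                        (∫ s in (x:ℝ)..L, (w (projIcc 0 L hL s)).2)),
              (cont_primitive1 hL w).prodMk (cont_primitive2 hL w)⟩
  map_add' w₁ w₂ := ContinuousMap.ext fun x => by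
    have h1 : Continuous fun s : ℝ => (w₁ (projIcc 0 L hL s)).1 := (cont_comp_projIcc hL w₁).fst
    have h2 : Continuous fun s : ℝ => (w₂ (projIcc 0 L hL s)).1 := (cont_comp_projIcc hL w₂).fst
    have h3 : Continuous fun s : ℝ => (w₁ (projIcc 0 L hL s)).2 := (cont_comp_projIcc hL w₁).snd
    have h4 : Continuous fun s : ℝ => (w₂ (projIcc 0 L hL s)).2 := (cont_comp_projIcc hL w₂).snd
    refine Prod.ext ?_ ?_
    · show (∫ s in (0:ℝ)..(x:ℝ), ((w₁ + w₂) (projIcc 0 L hL s)).1) = _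
      have : (fun s : ℝ => ((w₁ + w₂) (projIcc 0 L hL s)).1)
          = fun s : ℝ => (w₁ (projIcc 0 L hL s)).1 + (w₂ (projIcc 0 L hL s)).1 := by
        funext s; simp
      rw [this, intervalIntegral.integral_add (h1.intervalIntegrable _ _) (h2.intervalIntegrable _ _)]
      rfl
    · show (∫ s in (x:ℝ)..L, ((w₁ + w₂) (projIcc 0 L hL s)).2) = _
      have : (fun s : ℝ => ((w₁ + w₂) (projIcc 0 L hL s)).2)
          = fun s : ℝ => (w₁ (projIcc 0 L hL s)).2 + (w₂ (projIcc 0 L hL s)).2 := by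
        funext s; simp
      rw [this, intervalIntegral.integral_add (h3.intervalIntegrable _ _) (h4.intervalIntegrable _ _)]
      rfl
  map_smul' r w := ContinuousMap.ext fun x => by
    refine Prod.ext ?_ ?_
    · show (∫ s in (0:ℝ)..(x:ℝ), ((r • w) (projIcc 0 L hL s)).1) = _
      have : (fun s : ℝ => ((r • w) (projIcc 0 L hL s)).1)
          = fun s : ℝ => r • (w (projIcc 0 L hL s)).1 := by
        funext s; simp
      rw [this, intervalIntegral.integral_smul]
      rfl
    · show (∫ s in (x:ℝ)..L, ((r • w) (projIcc 0 L hL s)).2) = _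
      have : (fun s : ℝ => ((r • w) (projIcc 0 L hL s)).2)
          = fun s : ℝ => r • (w (projIcc 0 L hL s)).2 := by
        funext s; simp
      rw [this, intervalIntegral.integral_smul]
      rfl

lemma intLM_bound (hL : 0 ≤ L) (w : C(Icc (0:ℝ) L, ℝ×ℝ)) : ‖intLM hL w‖ ≤ L * ‖w‖ := by
  apply (ContinuousMap.norm_le _ (mul_nonneg hL (norm_nonneg w))).mpr
  intro x
  have hb1 : ∀ s : ℝ, ‖(w (projIcc 0 L hL s)).1‖ ≤ ‖w‖ := fun s =>
    le_trans (norm_fst_le _) (w.norm_coe_le_norm _)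
  have hb2 : ∀ s : ℝ, ‖(w (projIcc 0 L hL s)).2‖ ≤ ‖w‖ := fun s =>
    le_trans (norm_snd_le _) (w.norm_coe_le_norm _)
  rw [Prod.norm_def]
  have hx0 : (0:ℝ) ≤ (x:ℝ) := x.2.1
  have hxL : (x:ℝ) ≤ L := x.2.2
  apply max_le
  · calc ‖∫ s in (0:ℝ)..(x:ℝ), (w (projIcc 0 L hL s)).1‖
        ≤ ‖w‖ * |(x:ℝ) - 0| := intervalIntegral.norm_integral_le_of_norm_le_const
          (fun s _ => hb1 s)
    _ ≤ L * ‖w‖ := by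
        rw [sub_zero, abs_of_nonneg hx0, mul_comm]
        exact mul_le_mul_of_nonneg_right hxL (norm_nonneg w)
  · calc ‖∫ s in (x:ℝ)..L, (w (projIcc 0 L hL s)).2‖
        ≤ ‖w‖ * |L - (x:ℝ)| := intervalIntegral.norm_integral_le_of_norm_le_const
          (fun s _ => hb2 s)
    _ ≤ L * ‖w‖ := by
        rw [abs_of_nonneg (by linarith), mul_comm]
        have : L - (x:ℝ) ≤ L := by linarith
        exact mul_le_mul_of_nonneg_right this (norm_nonneg w)

def intCLM (hL : 0 ≤ L) : C(Icc (0:ℝ) L, ℝ×ℝ) →L[ℝ] C(Icc (0:ℝ) L, ℝ×ℝ) :=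
  LinearMap.mkContinuous (intLM hL) L (intLM_bound hL)

@[simp] lemma intCLM_apply (hL : 0 ≤ L) (w : C(Icc (0:ℝ) L, ℝ×ℝ)) (x : Icc (0:ℝ) L) :
    intCLM hL w x = ((∫ s in (0:ℝ)..(x:ℝ), (w (projIcc 0 L hL s)).1),
                     (∫ s in (x:ℝ)..L, (w (projIcc 0 L hL s)).2)) := rfl

end Stmt3Aux3

noncomputable section Stmt3Main

open ContinuousLinearMap

variable {L : ℝ}

/-- The fixed-point functional `G(ε, w) = (ε, w - (w₀ + ε • T(𝒩 w)))`. -/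
def GMap (hL : (0:ℝ) ≤ L) (Ft : ℝ×ℝ → ℝ×ℝ) (hFt : Continuous Ft)
    (w₀ : C(Icc (0:ℝ) L, ℝ×ℝ)) :
    ℝ × C(Icc (0:ℝ) L, ℝ×ℝ) → ℝ × C(Icc (0:ℝ) L, ℝ×ℝ) :=
  fun q => (q.1, q.2 - (w₀ + q.1 • intCLM hL (nem Ft hFt q.2)))

lemma GMap_contDiff (hL : (0:ℝ) ≤ L) {Ft : ℝ×ℝ → ℝ×ℝ} (hFt : ContDiff ℝ 1 Ft)
    (hFtc : HasCompactSupport Ft) (w₀ : C(Icc (0:ℝ) L, ℝ×ℝ)) :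
    ContDiff ℝ 1 (GMap hL Ft hFt.continuous w₀) := by
  apply ContDiff.prodMk contDiff_fst
  apply ContDiff.sub contDiff_snd
  apply ContDiff.add contDiff_const
  exact contDiff_fst.smul (((intCLM hL).contDiff).comp
    ((nem_contDiff hFt hFtc).comp contDiff_snd))

/-- The derivative of `GMap` at `(0, w₀)`, as a continuous linear equivalence. -/
def LamEquiv (hL : (0:ℝ) ≤ L) (Ft : ℝ×ℝ → ℝ×ℝ) (hFt : Continuous Ft)
    (w₀ : C(Icc (0:ℝ) L, ℝ×ℝ)) :
    (ℝ × C(Icc (0:ℝ) L, ℝ×ℝ)) ≃L[ℝ] (ℝ × C(Icc (0:ℝ) L, ℝ×ℝ)) :=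
  ContinuousLinearEquiv.equivOfInverse
    ((fst ℝ ℝ _).prod ((snd ℝ ℝ _) - (fst ℝ ℝ _).smulRight (intCLM hL (nem Ft hFt w₀))))
    ((fst ℝ ℝ _).prod ((snd ℝ ℝ _) + (fst ℝ ℝ _).smulRight (intCLM hL (nem Ft hFt w₀))))
    (fun q => by
      refine Prod.ext rfl ?_
      show (q.2 - q.1 • (intCLM hL (nem Ft hFt w₀))) + q.1 • (intCLM hL (nem Ft hFt w₀)) = q.2
      abel)
    (fun q => by
      refine Prod.ext rfl ?_
      show (q.2 + q.1 • (intCLM hL (nem Ft hFt w₀))) - q.1 • (intCLM hL (nem Ft hFt w₀)) = q.2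
      abel)

set_option synthInstance.maxHeartbeats 1000000 in
set_option maxHeartbeats 1000000 in
lemma GMap_hasFDerivAt (hL : (0:ℝ) ≤ L) {Ft : ℝ×ℝ → ℝ×ℝ} (hFt : ContDiff ℝ 1 Ft)
    (hFtc : HasCompactSupport Ft) (w₀ : C(Icc (0:ℝ) L, ℝ×ℝ)) :
    HasFDerivAt (GMap hL Ft hFt.continuous w₀)
      (LamEquiv hL Ft hFt.continuous w₀ : (ℝ × C(Icc (0:ℝ) L, ℝ×ℝ)) →L[ℝ] _)
      ((0:ℝ), w₀) := by
  have hmc : ContDiff ℝ 1 (fun q : ℝ × C(Icc (0:ℝ) L, ℝ×ℝ) =>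
      intCLM hL (nem Ft hFt.continuous q.2)) :=
    ((intCLM hL).contDiff).comp ((nem_contDiff hFt hFtc).comp contDiff_snd)
  have hmd := (hmc.differentiable one_ne_zero ((0:ℝ), w₀)).hasFDerivAt
  have hsm := hasFDerivAt_fst.smul hmd
  have hsecond := hasFDerivAt_snd.sub (hsm.const_add w₀)
  have hfull := hasFDerivAt_fst.prodMk hsecond
  rw [show (((0:ℝ), w₀).1 : ℝ) = 0 from rfl, zero_smul, zero_add] at hfull
  exact hfull

end Stmt3Main

set_option maxHeartbeats 2000000 in
set_option synthInstance.maxHeartbeats 1000000 in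
/-- Existence of a C¹ family `ε ↦ (ū_ε, v̄_ε)` of stationary states
of the quasilinear system, valued in the Banach space `C([0,L], ℝ²)`, with
`(ū₀, v̄₀) = (ū, v̄)`, staying in the ball of radius `R` around `(ū, v̄)`,
each `(ū_ε, v̄_ε)` being C¹ on `[0,L]` and solving
`λ(ū_ε,v̄_ε)∂ₓū_ε = εf(ū_ε,v̄_ε)`, `−μ(ū_ε,v̄_ε)∂ₓv̄_ε = εg(ū_ε,v̄_ε)` with
`ū_ε(0) = ū`, `v̄_ε(L) = v̄`. -/
theorem stmt3 (L : ℝ) (hL : 0 < L)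
    (lam mu f g : ℝ → ℝ → ℝ)
    (hlam : ContDiff ℝ 2 fun p : ℝ × ℝ => lam p.1 p.2)
    (hmu : ContDiff ℝ 2 fun p : ℝ × ℝ => mu p.1 p.2)
    (hf : ContDiff ℝ 2 fun p : ℝ × ℝ => f p.1 p.2)
    (hg : ContDiff ℝ 2 fun p : ℝ × ℝ => g p.1 p.2)
    (ubar vbar : ℝ) (hlam0 : 0 < lam ubar vbar) (hmu0 : 0 < mu ubar vbar)
    (c R : ℝ) (hc : 0 < c) (hR : 0 < R)
    (hcR : ∀ u v : ℝ, ‖(u - ubar, v - vbar)‖ ≤ 2 * R → c ≤ min (lam u v) (mu u v)) :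
    ∃ ε₀ : ℝ, 0 < ε₀ ∧ ∃ ue ve : ℝ → ℝ → ℝ,
      (∃ Φ : ℝ → C(Set.Icc (0:ℝ) L, ℝ × ℝ),
        (∀ (ε : ℝ) (x : Set.Icc (0:ℝ) L), Φ ε x = (ue ε x.1, ve ε x.1)) ∧
        ContDiffOn ℝ 1 Φ (Set.Icc (-ε₀) ε₀)) ∧
      (∀ x ∈ Set.Icc (0:ℝ) L, ue 0 x = ubar ∧ ve 0 x = vbar) ∧
      ∀ ε ∈ Set.Icc (-ε₀) ε₀,
        (∀ x ∈ Set.Icc (0:ℝ) L, ‖(ue ε x - ubar, ve ε x - vbar)‖ < R) ∧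
        ue ε 0 = ubar ∧ ve ε L = vbar ∧
        ∃ ue' ve' : ℝ → ℝ,
          ContinuousOn ue' (Set.Icc 0 L) ∧ ContinuousOn ve' (Set.Icc 0 L) ∧
          ∀ x ∈ Set.Icc (0:ℝ) L,
            HasDerivWithinAt (ue ε) (ue' x) (Set.Icc 0 L) x ∧
            HasDerivWithinAt (ve ε) (ve' x) (Set.Icc 0 L) x ∧
            lam (ue ε x) (ve ε x) * ue' x = ε * f (ue ε x) (ve ε x) ∧
            -(mu (ue ε x) (ve ε x)) * ve' x = ε * g (ue ε x) (ve ε x) := by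
  classical
  have hL' : (0:ℝ) ≤ L := hL.le
  have hFt1 : ContDiff ℝ 1 (Ftc lam mu f g ubar vbar R hR) :=
    Ftc_smooth hR hc hlam hmu hf hg hcR
  have hFtc : HasCompactSupport (Ftc lam mu f g ubar vbar R hR) := Ftc_supp hR
  set Ft : ℝ×ℝ → ℝ×ℝ := Ftc lam mu f g ubar vbar R hR with hFtdef
  set w₀ : C(Icc (0:ℝ) L, ℝ×ℝ) := ContinuousMap.const _ ((ubar, vbar) : ℝ×ℝ) with hw0def
  have hGc : ContDiffAt ℝ 1 (GMap hL' Ft hFt1.continuous w₀) ((0:ℝ), w₀) :=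
    (GMap_contDiff hL' hFt1 hFtc w₀).contDiffAt
  have hGa' := GMap_hasFDerivAt hL' hFt1 hFtc w₀
  set inv : ℝ × C(Icc (0:ℝ) L, ℝ×ℝ) → ℝ × C(Icc (0:ℝ) L, ℝ×ℝ) :=
    hGc.localInverse hGa' one_ne_zero with hinvdef
  have hstrict : HasStrictFDerivAt (GMap hL' Ft hFt1.continuous w₀)
      ((LamEquiv hL' Ft hFt1.continuous w₀ : _ →L[ℝ] _)) ((0:ℝ), w₀) :=
    hGc.hasStrictFDerivAt' hGa' one_ne_zero
  have hGa0 : GMap hL' Ft hFt1.continuous w₀ ((0:ℝ), w₀)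
      = ((0:ℝ), (0 : C(Icc (0:ℝ) L, ℝ×ℝ))) := by
    refine Prod.ext rfl ?_
    show w₀ - (w₀ + (0:ℝ) • intCLM hL' (nem Ft hFt1.continuous w₀)) = 0
    rw [zero_smul, add_zero, sub_self]
  have hinv_cd : ContDiffAt ℝ 1 inv (((0:ℝ), (0 : C(Icc (0:ℝ) L, ℝ×ℝ)))) := by
    rw [← hGa0]
    exact hGc.to_localInverse hGa' one_ne_zero
  have hinv00 : inv ((0:ℝ), (0 : C(Icc (0:ℝ) L, ℝ×ℝ))) = ((0:ℝ), w₀) := by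
    rw [← hGa0]
    exact hGc.localInverse_apply_image hGa' one_ne_zero
  set W : ℝ → C(Icc (0:ℝ) L, ℝ×ℝ) := fun ε => (inv (ε, 0)).2 with hWdef
  have hW0 : W 0 = w₀ := by
    show (inv ((0:ℝ), 0)).2 = w₀
    rw [hinv00]
  have hWc : ContDiffAt ℝ 1 W 0 := by
    have h1 : ContDiffAt ℝ 1 (fun ε : ℝ => ((ε, (0 : C(Icc (0:ℝ) L, ℝ×ℝ))) : ℝ × _)) 0 :=
      (contDiff_id.prodMk contDiff_const).contDiffAt
    have h2 : ContDiffAt ℝ 1 (inv ∘ fun ε : ℝ => ((ε, (0 : C(Icc (0:ℝ) L, ℝ×ℝ))) : ℝ × _)) 0 :=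
      ContDiffAt.comp 0 hinv_cd h1
    have h3 : ContDiffAt ℝ 1
        (Prod.snd ∘ (inv ∘ fun ε : ℝ => ((ε, (0 : C(Icc (0:ℝ) L, ℝ×ℝ))) : ℝ × _))) 0 :=
      ContDiffAt.comp 0 contDiff_snd.contDiffAt h2
    exact h3
  have htend : Filter.Tendsto (fun ε : ℝ => ((ε, (0 : C(Icc (0:ℝ) L, ℝ×ℝ))) : ℝ × _)) (𝓝 0)
      (𝓝 (GMap hL' Ft hFt1.continuous w₀ ((0:ℝ), w₀))) := by
    rw [hGa0]
    exact (continuous_id.prodMk continuous_const).tendsto 0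
  have hfix_ev : ∀ᶠ ε : ℝ in 𝓝 0,
      GMap hL' Ft hFt1.continuous w₀ (inv (ε, 0)) = (ε, 0) :=
    htend.eventually hstrict.eventually_right_inverse
  have hball_ev : ∀ᶠ ε : ℝ in 𝓝 0, ‖W ε - w₀‖ < R := by
    have hWt : Filter.Tendsto W (𝓝 0) (𝓝 w₀) := by
      rw [← hW0]; exact hWc.continuousAt
    filter_upwards [hWt (Metric.ball_mem_nhds w₀ hR)] with ε hε
    rw [Set.mem_preimage, Metric.mem_ball, dist_eq_norm] at hε
    exact hε
  obtain ⟨u, hu_nhds, hu⟩ := hWc.contDiffOn le_rfl (by intro h; simp at h)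
  have hu_ev : ∀ᶠ ε : ℝ in 𝓝 0, ε ∈ u := hu_nhds
  obtain ⟨δ, hδpos, hδall⟩ := Metric.eventually_nhds_iff.1 ((hfix_ev.and hball_ev).and hu_ev)
  refine ⟨δ/2, by positivity, fun ε x => (W ε (projIcc 0 L hL' x)).1,
    fun ε x => (W ε (projIcc 0 L hL' x)).2, ⟨W, ?_, ?_⟩, ?_, ?_⟩
  · intro ε x
    simp only [Set.projIcc_val]
  · -- ContDiffOn W (Icc (-(δ/2)) (δ/2))
    apply hu.mono
    intro ε hε
    have hd : dist ε 0 < δ := by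
      rw [Real.dist_eq, sub_zero]
      rcases Set.mem_Icc.1 hε with ⟨h1, h2⟩
      rw [abs_lt]
      constructor <;> linarith
    exact (hδall hd).2
  · intro x hx
    constructor
    · show (W 0 (projIcc 0 L hL' x)).1 = ubar
      rw [hW0]
      rfl
    · show (W 0 (projIcc 0 L hL' x)).2 = vbar
      rw [hW0]
      rfl
  · intro ε hε
    have hd : dist ε 0 < δ := by
      rw [Real.dist_eq, sub_zero]
      rcases Set.mem_Icc.1 hε with ⟨h1, h2⟩
      rw [abs_lt]
      constructor <;> linarith
    obtain ⟨⟨hfix, hballε⟩, -⟩ := hδall hd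
    -- fixed point equation
    have h1 : (inv (ε, 0)).1 = ε := congrArg Prod.fst hfix
    have h2 : (inv (ε, 0)).2 - (w₀ + (inv (ε, 0)).1 •
        intCLM hL' (nem Ft hFt1.continuous ((inv (ε, 0)).2))) = 0 := congrArg Prod.snd hfix
    rw [h1] at h2
    have hfp : W ε = w₀ + ε • intCLM hL' (nem Ft hFt1.continuous (W ε)) := sub_eq_zero.1 h2
    -- integrand
    have hψ : Continuous fun s : ℝ => Ft (W ε (projIcc 0 L hL' s)) :=
      hFt1.continuous.comp ((map_continuous (W ε)).comp continuous_projIcc)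
    have hψ₁ : Continuous fun s : ℝ => (Ft (W ε (projIcc 0 L hL' s))).1 := hψ.fst
    have hψ₂ : Continuous fun s : ℝ => (Ft (W ε (projIcc 0 L hL' s))).2 := hψ.snd
    -- pointwise formula
    have hform : ∀ y (hy : y ∈ Icc (0:ℝ) L),
        W ε ⟨y, hy⟩ = ((ubar, vbar) : ℝ×ℝ) + ε •
          (((∫ s in (0:ℝ)..y, (Ft (W ε (projIcc 0 L hL' s))).1),
            (∫ s in y..L, (Ft (W ε (projIcc 0 L hL' s))).2)) : ℝ×ℝ) := by
      intro y hy
      conv_lhs => rw [hfp]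
      rfl
    have hueform : ∀ y (hy : y ∈ Icc (0:ℝ) L),
        (W ε (projIcc 0 L hL' y)).1
          = ubar + ε * ∫ s in (0:ℝ)..y, (Ft (W ε (projIcc 0 L hL' s))).1 := by
      intro y hy
      rw [projIcc_of_mem hL' hy, hform y hy]
      rfl
    have hveform : ∀ y (hy : y ∈ Icc (0:ℝ) L),
        (W ε (projIcc 0 L hL' y)).2
          = vbar + ε * ∫ s in y..L, (Ft (W ε (projIcc 0 L hL' s))).2 := by
      intro y hy
      rw [projIcc_of_mem hL' hy, hform y hy]
      rfl
    refine ⟨?_, ?_, ?_, ?_⟩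
    · -- ball bound
      intro x hx
      show ‖((W ε (projIcc 0 L hL' x)).1 - ubar, (W ε (projIcc 0 L hL' x)).2 - vbar)‖ < R
      rw [projIcc_of_mem hL' hx]
      have hb1 : ‖(W ε - w₀) (⟨x, hx⟩ : Icc (0:ℝ) L)‖ ≤ ‖W ε - w₀‖ :=
        (W ε - w₀).norm_coe_le_norm _
      have hb2 : (W ε - w₀) (⟨x, hx⟩ : Icc (0:ℝ) L)
          = W ε ⟨x, hx⟩ - ((ubar, vbar) : ℝ×ℝ) := rfl
      calc ‖((W ε ⟨x, hx⟩).1 - ubar, (W ε ⟨x, hx⟩).2 - vbar)‖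
          = ‖(W ε - w₀) (⟨x, hx⟩ : Icc (0:ℝ) L)‖ := by rw [hb2]; rfl
      _ ≤ ‖W ε - w₀‖ := hb1
      _ < R := hballε
    · -- ue ε 0 = ubar
      show (W ε (projIcc 0 L hL' 0)).1 = ubar
      rw [hueform 0 ⟨le_rfl, hL'⟩, intervalIntegral.integral_same, mul_zero, add_zero]
    · -- ve ε L = vbar
      show (W ε (projIcc 0 L hL' L)).2 = vbar
      rw [hveform L ⟨hL', le_rfl⟩, intervalIntegral.integral_same, mul_zero, add_zero]
    · -- derivatives and equations
      refine ⟨fun x => ε * (Ft (W ε (projIcc 0 L hL' x))).1,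
        fun x => -(ε * (Ft (W ε (projIcc 0 L hL' x))).2), ?_, ?_, ?_⟩
      · exact (continuous_const.mul hψ₁).continuousOn
      · exact ((continuous_const.mul hψ₂).neg).continuousOn
      intro x hx
      have hballx : dist (W ε ⟨x, hx⟩) ((ubar, vbar) : ℝ×ℝ) ≤ R := by
        have hb1 : ‖(W ε - w₀) (⟨x, hx⟩ : Icc (0:ℝ) L)‖ ≤ ‖W ε - w₀‖ :=
          (W ε - w₀).norm_coe_le_norm _
        rw [dist_eq_norm]
        exact le_of_lt (lt_of_le_of_lt hb1 hballε)
      obtain ⟨hFv, hlamc, hmuc⟩ :=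
        Ftc_eq (lam := lam) (mu := mu) (f := f) (g := g) hR hc hcR (W ε ⟨x, hx⟩) hballx
      rw [← hFtdef] at hFv
      have hprojx : projIcc 0 L hL' x = (⟨x, hx⟩ : Icc (0:ℝ) L) := projIcc_of_mem hL' hx
      refine ⟨?_, ?_, ?_, ?_⟩
      · -- HasDerivWithinAt ue
        have hPd : HasDerivAt (fun z : ℝ => ubar + ε * ∫ s in (0:ℝ)..z,
            (Ft (W ε (projIcc 0 L hL' s))).1) (ε * (Ft (W ε (projIcc 0 L hL' x))).1) x :=
          ((intervalIntegral.integral_hasDerivAt_right (hψ₁.intervalIntegrable 0 x)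
            (hψ₁.stronglyMeasurableAtFilter _ _) hψ₁.continuousAt).const_mul ε).const_add ubar
        refine (hPd.hasDerivWithinAt).congr ?_ ?_
        · intro z hz
          exact hueform z hz
        · exact hueform x hx
      · -- HasDerivWithinAt ve
        have hid : ∀ z : ℝ, vbar + ε * ((∫ s in (0:ℝ)..L, (Ft (W ε (projIcc 0 L hL' s))).2)
            - ∫ s in (0:ℝ)..z, (Ft (W ε (projIcc 0 L hL' s))).2)
            = vbar + ε * ∫ s in z..L, (Ft (W ε (projIcc 0 L hL' s))).2 := by
          intro z
          rw [integral_right_eq hL' _ hψ₂ z]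
        have hQd : HasDerivAt (fun z : ℝ => vbar + ε * ((∫ s in (0:ℝ)..L,
              (Ft (W ε (projIcc 0 L hL' s))).2)
            - ∫ s in (0:ℝ)..z, (Ft (W ε (projIcc 0 L hL' s))).2))
            (ε * -(Ft (W ε (projIcc 0 L hL' x))).2) x :=
          (((intervalIntegral.integral_hasDerivAt_right (hψ₂.intervalIntegrable 0 x)
            (hψ₂.stronglyMeasurableAtFilter _ _) hψ₂.continuousAt).const_sub _).const_mul
              ε).const_add vbar
        rw [mul_neg] at hQd
        refine (hQd.hasDerivWithinAt).congr ?_ ?_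
        · intro z hz
          rw [hid z]
          exact hveform z hz
        · rw [hid x]
          exact hveform x hx
      · -- first equation
        show lam (W ε (projIcc 0 L hL' x)).1 (W ε (projIcc 0 L hL' x)).2
            * (ε * (Ft (W ε (projIcc 0 L hL' x))).1)
          = ε * f (W ε (projIcc 0 L hL' x)).1 (W ε (projIcc 0 L hL' x)).2
        rw [hprojx, hFv]
        have hne : lam (W ε ⟨x, hx⟩).1 (W ε ⟨x, hx⟩).2 ≠ 0 :=
          (lt_of_lt_of_le hc hlamc).ne'
        show lam _ _ * (ε * (f _ _ / lam _ _)) = ε * f _ _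
        field_simp
      · -- second equation
        show -(mu (W ε (projIcc 0 L hL' x)).1 (W ε (projIcc 0 L hL' x)).2)
            * (-(ε * (Ft (W ε (projIcc 0 L hL' x))).2))
          = ε * g (W ε (projIcc 0 L hL' x)).1 (W ε (projIcc 0 L hL' x)).2
        rw [hprojx, hFv]
        have hne : mu (W ε ⟨x, hx⟩).1 (W ε ⟨x, hx⟩).2 ≠ 0 :=
          (lt_of_lt_of_le hc hmuc).ne'
        show -(mu _ _) * (-(ε * (g _ _ / mu _ _))) = ε * g _ _
        field_simp
end

section
/- Let L > 0 and let u : [0,L] → ℝ be Lipschitz continuous. Then at least one of the following two inequalities holds: ‖u‖_{L^∞(0,L)} ≤ (2/√L) ‖u‖_{L²(0,L)}, or ‖u‖³_{L^∞(0,L)} ≤ 8 ‖u‖²_{L²(0,L)} ‖u'‖_{L^∞(0,L)}, where ‖u'‖_{L^∞(0,L)} denotes the essential supremum of the (almost everywhere defined) derivative of u. -/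
open Set intervalIntegral MeasureTheory

set_option maxHeartbeats 1000000 in
lemma stmt4_aux (L : ℝ) (hL : 0 < L) (u : ℝ → ℝ) (K : NNReal)
    (hu : LipschitzOnWith K u (Set.Icc 0 L)) (x₀ : ℝ) (hx₀ : x₀ ∈ Set.Icc 0 (L/2))
    (M : ℝ) (hM : ∀ x ∈ Set.Icc 0 L, |u x| ≤ M) (hMx₀ : |u x₀| = M) :
    M ≤ 2 / Real.sqrt L * Real.sqrt (∫ x in (0:ℝ)..L, (u x) ^ 2) ∨
    M ^ 3 ≤ 8 * (∫ x in (0:ℝ)..L, (u x) ^ 2) * (K : ℝ) := by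
  have hM0 : 0 ≤ M := hMx₀ ▸ abs_nonneg _
  obtain ⟨hx₀0, hx₀L⟩ := hx₀
  have hx₀mem : x₀ ∈ Icc (0:ℝ) L := ⟨hx₀0, hx₀L.trans (by linarith)⟩
  have hcont : ContinuousOn (fun x => u x ^ 2) (Icc 0 L) :=
    (hu.continuousOn.pow 2)
  have hint : IntervalIntegrable (fun x => u x ^ 2) volume 0 L :=
    hcont.intervalIntegrable_of_Icc hL.le
  have hI0 : 0 ≤ ∫ x in (0:ℝ)..L, u x ^ 2 :=
    intervalIntegral.integral_nonneg hL.le (fun x _ => sq_nonneg _)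
  obtain ⟨I, hIdef⟩ : ∃ I : ℝ, I = ∫ x in (0:ℝ)..L, u x ^ 2 := ⟨_, rfl⟩
  rw [← hIdef] at hI0 ⊢
  -- pointwise lower bound
  have hlow : ∀ x ∈ Icc x₀ L, M - K * (x - x₀) ≤ |u x| := by
    intro x hx
    have hxm : x ∈ Icc (0:ℝ) L := ⟨le_trans hx₀0 hx.1, hx.2⟩
    have h0 := hu.dist_le_mul x₀ hx₀mem x hxm
    rw [Real.dist_eq, Real.dist_eq] at h0
    have h1 : |u x₀| - |u x| ≤ |u x₀ - u x| := abs_sub_abs_le_abs_sub _ _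
    have h2 : |x₀ - x| = x - x₀ := by
      rw [abs_sub_comm, abs_of_nonneg (by linarith [hx.1])]
    rw [h2] at h0
    linarith [hMx₀ ▸ (h1.trans h0)]
  -- generic subinterval bound
  have hsub : ∀ ℓ : ℝ, 0 ≤ ℓ → ℓ ≤ L / 2 →
      (∫ x in x₀..(x₀ + ℓ), u x ^ 2) ≤ I := by
    intro ℓ h0 h2
    rw [hIdef]
    apply intervalIntegral.integral_mono_interval hx₀0 (by linarith) (by linarith)
    · filter_upwards with x using sq_nonneg _
    · exact hint
  have hintsub : ∀ ℓ : ℝ, 0 ≤ ℓ → ℓ ≤ L / 2 →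
      IntervalIntegrable (fun x => u x ^ 2) volume x₀ (x₀ + ℓ) := by
    intro ℓ h0 h2
    exact hint.mono_set (by
      rw [Set.uIcc_of_le (by linarith), Set.uIcc_of_le hL.le]
      exact Icc_subset_Icc hx₀0 (by linarith))
  by_cases hcase : (K : ℝ) * L ≤ M
  · -- first disjunct
    left
    have hptwise : ∀ x ∈ Icc x₀ (x₀ + L/2),
        M ^ 2 - 2 * M * K * (x - x₀) ≤ u x ^ 2 := by
      intro x hx
      have hx' : x ∈ Icc x₀ L := ⟨hx.1, by linarith [hx.2]⟩
      have hl := hlow x hx'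
      rcases le_or_gt (M - K * (x - x₀)) 0 with h | h
      · nlinarith [sq_nonneg (u x), hx.1, NNReal.coe_nonneg K]
      · nlinarith [sq_abs (u x), sq_nonneg ((K:ℝ) * (x - x₀))]
    have hi1 : (∫ x in x₀..(x₀ + L/2), (M ^ 2 - 2 * M * K * (x - x₀))) ≤
        ∫ x in x₀..(x₀ + L/2), u x ^ 2 := by
      apply intervalIntegral.integral_mono_on (by linarith)
      · exact (Continuous.intervalIntegrable (by continuity) _ _)
      · exact hintsub (L/2) (by linarith) le_rfl
      · exact hptwise
    have hcomp : (∫ x in x₀..(x₀ + L/2), (M ^ 2 - 2 * M * K * (x - x₀))) =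
        M ^ 2 * (L/2) - M * K * (L/2)^2 := by
      have key := intervalIntegral.integral_comp_sub_right (a := x₀) (b := x₀ + L/2)
        (fun x => M ^ 2 - 2 * M * (K:ℝ) * x) x₀
      have hb1 : x₀ - x₀ = (0:ℝ) := by ring
      have hb2 : x₀ + L/2 - x₀ = L/2 := by ring
      rw [hb1, hb2] at key
      rw [key]
      rw [intervalIntegral.integral_sub intervalIntegrable_const
        (Continuous.intervalIntegrable (by continuity) _ _)]
      rw [intervalIntegral.integral_const, smul_eq_mul]
      rw [show (fun x : ℝ => 2 * M * (K:ℝ) * x) = (fun x : ℝ => (2 * M * (K:ℝ)) * x) from rfl]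
      rw [intervalIntegral.integral_const_mul, integral_id]
      ring
    have hIlb : M ^ 2 * L / 4 ≤ I := by
      have h5 := (hcomp ▸ hi1).trans (hsub (L/2) (by linarith) le_rfl)
      nlinarith [mul_le_mul_of_nonneg_right
        (mul_le_mul_of_nonneg_left hcase hM0) hL.le]
    have h4 : M ^ 2 ≤ 4 * I / L := by
      rw [le_div_iff₀ hL]; linarith
    calc M = Real.sqrt (M ^ 2) := (Real.sqrt_sq hM0).symm
      _ ≤ Real.sqrt (4 * I / L) := Real.sqrt_le_sqrt h4
      _ = Real.sqrt (4 * I) / Real.sqrt L := Real.sqrt_div (by linarith) L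
      _ = 2 * Real.sqrt I / Real.sqrt L := by
          rw [show (4:ℝ) * I = 2^2 * I by ring, Real.sqrt_mul (by norm_num : (0:ℝ) ≤ 2^2),
            Real.sqrt_sq (by norm_num)]
      _ = 2 / Real.sqrt L * Real.sqrt I := by ring
  · right
    push_neg at hcase
    have hK : (0:ℝ) < K := by
      rcases (NNReal.coe_nonneg K).lt_or_eq with h | h
      · exact h
      · exfalso; rw [← h] at hcase; simp at hcase; linarith
    have hKne : (K:ℝ) ≠ 0 := ne_of_gt hK
    obtain ⟨ℓ, hℓdef⟩ : ∃ l : ℝ, l = M / (2 * K) := ⟨_, rfl⟩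
    have hℓ0 : 0 ≤ ℓ := by rw [hℓdef]; positivity
    have hℓ2 : ℓ ≤ L / 2 := by
      rw [hℓdef, div_le_div_iff₀ (by linarith) (by norm_num)]
      nlinarith
    have hptwise : ∀ x ∈ Icc x₀ (x₀ + ℓ), (M/2) ^ 2 ≤ u x ^ 2 := by
      intro x hx
      have hx' : x ∈ Icc x₀ L := ⟨hx.1, by linarith [hx.2, hℓ2]⟩
      have hl := hlow x hx'
      have h1 : (K:ℝ) * (x - x₀) ≤ M / 2 := by
        have hxl : x - x₀ ≤ ℓ := by linarith [hx.2]
        have : (K:ℝ) * (x - x₀) ≤ K * ℓ := by nlinarith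
        have hKl : (K:ℝ) * ℓ = M / 2 := by
          rw [hℓdef]; field_simp
        linarith
      have h2 : M / 2 ≤ |u x| := by linarith
      nlinarith [sq_abs (u x), abs_nonneg (u x)]
    have hconst : (∫ _x in x₀..(x₀ + ℓ), ((M/2)^2 : ℝ)) = ℓ * (M/2)^2 := by
      rw [intervalIntegral.integral_const, smul_eq_mul]; ring
    have hi1 : ℓ * (M/2)^2 ≤ ∫ x in x₀..(x₀ + ℓ), u x ^ 2 := by
      rw [← hconst]
      exact intervalIntegral.integral_mono_on (by linarith)
        intervalIntegrable_const (hintsub ℓ hℓ0 hℓ2) hptwise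
    have hIlb : M ^ 3 / (8 * K) ≤ I := by
      have h6 := hi1.trans (hsub ℓ hℓ0 hℓ2)
      have heq : ℓ * (M/2)^2 = M ^ 3 / (8 * K) := by
        rw [hℓdef]; field_simp; ring
      linarith [heq ▸ h6]
    rw [div_le_iff₀ (by positivity)] at hIlb
    nlinarith

/-- For a Lipschitz function `u` on `[0,L]`, either
`‖u‖_∞ ≤ (2/√L)‖u‖_{L²}` or `‖u‖_∞³ ≤ 8 ‖u‖_{L²}² ‖u'‖_∞`, where the essential
supremum of the a.e. derivative of a Lipschitz function is its best Lipschitz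
constant (so any Lipschitz constant `K` is an upper bound for it). -/
theorem stmt4 (L : ℝ) (hL : 0 < L) (u : ℝ → ℝ) (K : NNReal)
    (hu : LipschitzOnWith K u (Set.Icc 0 L)) :
    (⨆ x : Set.Icc (0:ℝ) L, |u x.1|) ≤
        2 / Real.sqrt L * Real.sqrt (∫ x in (0:ℝ)..L, (u x) ^ 2) ∨
    (⨆ x : Set.Icc (0:ℝ) L, |u x.1|) ^ 3 ≤
        8 * (∫ x in (0:ℝ)..L, (u x) ^ 2) * (K : ℝ) := by
  have hne : (Set.Icc (0:ℝ) L).Nonempty := ⟨0, by constructor <;> [rfl; exact hL.le]⟩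
  obtain ⟨x₀, hx₀mem, hmax⟩ := isCompact_Icc.exists_isMaxOn hne (hu.continuousOn.abs)
  have hMub : ∀ x ∈ Set.Icc (0:ℝ) L, |u x| ≤ |u x₀| := fun x hx => hmax hx
  haveI := hne.to_subtype
  have hMeq : (⨆ x : Set.Icc (0:ℝ) L, |u x.1|) = |u x₀| := by
    apply le_antisymm
    · exact ciSup_le (fun x => hMub x.1 x.2)
    · exact le_ciSup (f := fun x : Set.Icc (0:ℝ) L => |u x.1|)
        ⟨|u x₀|, by rintro y ⟨x, rfl⟩; exact hMub x.1 x.2⟩ ⟨x₀, hx₀mem⟩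
  rw [hMeq]
  rcases le_or_gt x₀ (L/2) with hhalf | hhalf
  · exact stmt4_aux L hL u K hu x₀ ⟨hx₀mem.1, hhalf⟩ _ hMub rfl
  · -- reflect
    have hmap : Set.MapsTo (fun x => L - x) (Set.Icc (0:ℝ) L) (Set.Icc (0:ℝ) L) := by
      intro x hx
      simp only [Set.mem_Icc] at hx ⊢
      constructor <;> linarith [hx.1, hx.2]
    have hlip : LipschitzWith 1 (fun x : ℝ => L - x) :=
      LipschitzWith.of_dist_le_mul (fun x y => by
        rw [NNReal.coe_one, one_mul, Real.dist_eq, Real.dist_eq,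
          show L - x - (L - y) = -(x - y) by ring, abs_neg])
    have hv : LipschitzOnWith K (fun x => u (L - x)) (Set.Icc 0 L) := by
      have := hu.comp (hlip.lipschitzOnWith (s := Set.Icc (0:ℝ) L)) hmap
      simpa [Function.comp_def] using this
    have hx₀' : L - x₀ ∈ Set.Icc (0:ℝ) (L/2) := ⟨by linarith [hx₀mem.2], by linarith⟩
    have hMv : ∀ x ∈ Set.Icc (0:ℝ) L, |u (L - x)| ≤ |u x₀| :=
      fun x hx => hMub _ (hmap hx)
    have hval : |u (L - (L - x₀))| = |u x₀| := by norm_num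
    have hInt : (∫ x in (0:ℝ)..L, (u (L - x)) ^ 2) = ∫ x in (0:ℝ)..L, (u x) ^ 2 := by
      have := intervalIntegral.integral_comp_sub_left (a := (0:ℝ)) (b := L)
        (fun y => u y ^ 2) L
      simpa using this
    have := stmt4_aux L hL (fun x => u (L - x)) K hv (L - x₀) hx₀' _ hMv hval
    rw [hInt] at this
    exact this
end

section
/- Let L > 0 and let u : [0,L] → ℝ be Lipschitz continuous with u(0) = 0. Then ‖u‖³_{L^∞(0,L)} ≤ 16 ‖u‖²_{L²(0,L)} ‖u'‖_{L^∞(0,L)}, where ‖u'‖_{L^∞(0,L)} denotes the essential supremum of the (almost everywhere defined) derivative of u. -/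
/-- For a Lipschitz function `u` on `[0,L]` with `u 0 = 0`,
`‖u‖_∞³ ≤ 16 ‖u‖_{L²}² ‖u'‖_∞`, where the essential supremum of the a.e.
derivative of a Lipschitz function is its best Lipschitz constant (so any
Lipschitz constant `K` is an upper bound for it). -/
theorem stmt5 (L : ℝ) (hL : 0 < L) (u : ℝ → ℝ) (K : NNReal)
    (hu : LipschitzOnWith K u (Set.Icc 0 L)) (hu0 : u 0 = 0) :
    (⨆ x : Set.Icc (0:ℝ) L, |u x.1|) ^ 3 ≤
      16 * (∫ x in (0:ℝ)..L, (u x) ^ 2) * (K : ℝ) := by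
  have hcont : ContinuousOn u (Set.Icc 0 L) := hu.continuousOn
  have hne : (Set.Icc (0:ℝ) L).Nonempty := ⟨0, le_refl 0, hL.le⟩
  haveI : Nonempty (Set.Icc (0:ℝ) L) := hne.to_subtype
  obtain ⟨x₀, hx₀mem, hx₀max⟩ := isCompact_Icc.exists_isMaxOn hne hcont.abs
  set M : ℝ := ⨆ x : Set.Icc (0:ℝ) L, |u x.1| with hMdef
  have hMle : M ≤ |u x₀| := ciSup_le (fun x => hx₀max x.2)
  have hleM : |u x₀| ≤ M :=
    le_ciSup ⟨|u x₀|, by rintro y ⟨x, rfl⟩; exact hx₀max x.2⟩ (⟨x₀, hx₀mem⟩ : Set.Icc (0:ℝ) L)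
  have hMeq : M = |u x₀| := le_antisymm hMle hleM
  have hM0 : 0 ≤ M := hMeq ▸ abs_nonneg _
  have hint : IntervalIntegrable (fun x => u x ^ 2) MeasureTheory.volume 0 L := by
    apply ContinuousOn.intervalIntegrable
    rw [Set.uIcc_of_le hL.le]
    exact hcont.pow 2
  have hIpos : 0 ≤ ∫ x in (0:ℝ)..L, (u x) ^ 2 :=
    intervalIntegral.integral_nonneg hL.le (fun x _ => sq_nonneg _)
  have hKnn : (0:ℝ) ≤ K := K.coe_nonneg
  rcases eq_or_lt_of_le hM0 with hM0' | hMpos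
  · rw [← hM0']
    have : (0:ℝ)^3 = 0 := by norm_num
    rw [this]
    positivity
  have hKpos : (0:ℝ) < K := by
    rcases eq_or_lt_of_le hKnn with h0 | h
    · exfalso
      have hd := hu.dist_le_mul x₀ hx₀mem 0 ⟨le_refl 0, hL.le⟩
      rw [← h0] at hd
      simp [Real.dist_eq, hu0] at hd
      have : |u x₀| ≤ 0 := by simpa using hd
      have := hMeq ▸ this
      linarith
    · exact h
  -- M ≤ K * L
  have hMKL : M ≤ (K : ℝ) * L := by
    have hd := hu.dist_le_mul x₀ hx₀mem 0 ⟨le_refl 0, hL.le⟩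
    rw [Real.dist_eq, Real.dist_eq, hu0, sub_zero, sub_zero] at hd
    have hx₀L : |x₀| ≤ L := by
      rw [abs_of_nonneg hx₀mem.1]; exact hx₀mem.2
    calc M = |u x₀| := hMeq
      _ ≤ (K:ℝ) * |x₀| := hd
      _ ≤ (K:ℝ) * L := by apply mul_le_mul_of_nonneg_left hx₀L hKnn
  set r : ℝ := M / (4 * K) with hrdef
  have hrpos : 0 < r := by positivity
  have hrL : r ≤ L / 4 := by
    rw [hrdef, div_le_div_iff₀ (by positivity) (by norm_num)]
    nlinarith
  have hKr : (K : ℝ) * r = M / 4 := by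
    rw [hrdef]; field_simp
  obtain ⟨a, b, ha0, hbL, hab, hclose⟩ :
      ∃ a b : ℝ, 0 ≤ a ∧ b ≤ L ∧ b - a = r ∧ ∀ x ∈ Set.Icc a b, |x - x₀| ≤ r := by
    by_cases h : x₀ + r ≤ L
    · refine ⟨x₀, x₀ + r, hx₀mem.1, h, by ring, fun x hx => ?_⟩
      rw [abs_sub_le_iff]
      exact ⟨by linarith [hx.2], by linarith [hx.1]⟩
    · push_neg at h
      refine ⟨x₀ - r, x₀, by linarith [hx₀mem.2], hx₀mem.2, by ring, fun x hx => ?_⟩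
      rw [abs_sub_le_iff]
      exact ⟨by linarith [hx.2], by linarith [hx.1]⟩
  have hab' : a ≤ b := by linarith
  have hsub : Set.Icc a b ⊆ Set.Icc 0 L :=
    fun x hx => ⟨ha0.trans hx.1, hx.2.trans hbL⟩
  have hptwise : ∀ x ∈ Set.Icc a b, (M / 2) ^ 2 ≤ u x ^ 2 := by
    intro x hx
    have hxmem : x ∈ Set.Icc (0:ℝ) L := hsub hx
    have hd := hu.dist_le_mul x₀ hx₀mem x hxmem
    rw [Real.dist_eq, Real.dist_eq] at hd
    have h1 : |u x₀| - |u x| ≤ |u x₀ - u x| := abs_sub_abs_le_abs_sub _ _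
    have h2 : |x₀ - x| ≤ r := by
      rw [abs_sub_comm]; exact hclose x hx
    have h3 : (K:ℝ) * |x₀ - x| ≤ (K:ℝ) * r := mul_le_mul_of_nonneg_left h2 hKnn
    have h4 : M / 2 ≤ |u x| := by
      rw [hMeq] at hMpos ⊢
      nlinarith [hKr]
    have h5 : (M / 2) ^ 2 ≤ |u x| ^ 2 := by
      apply pow_le_pow_left₀ (by positivity) h4
    rwa [sq_abs] at h5
  have hint_ab : IntervalIntegrable (fun x => u x ^ 2) MeasureTheory.volume a b := by
    apply hint.mono_set
    rw [Set.uIcc_of_le hab', Set.uIcc_of_le hL.le]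
    exact hsub
  have h1 : (b - a) * ((M / 2) ^ 2) ≤ ∫ x in a..b, u x ^ 2 := by
    have := intervalIntegral.integral_mono_on hab'
      (intervalIntegrable_const (c := (M / 2) ^ 2)) hint_ab hptwise
    simpa [intervalIntegral.integral_const, smul_eq_mul] using this
  have h2 : (∫ x in a..b, u x ^ 2) ≤ ∫ x in (0:ℝ)..L, u x ^ 2 :=
    intervalIntegral.integral_mono_interval ha0 hab' hbL
      (Filter.Eventually.of_forall fun x => sq_nonneg _) hint
  have key : r * ((M / 2) ^ 2) ≤ ∫ x in (0:ℝ)..L, (u x) ^ 2 := by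
    calc r * ((M / 2) ^ 2) = (b - a) * ((M / 2) ^ 2) := by rw [hab]
      _ ≤ ∫ x in a..b, u x ^ 2 := h1
      _ ≤ ∫ x in (0:ℝ)..L, (u x) ^ 2 := h2
  have heq : M ^ 3 = 16 * (r * ((M / 2) ^ 2)) * K := by
    rw [hrdef]; field_simp; ring
  calc M ^ 3 = 16 * (r * ((M / 2) ^ 2)) * K := heq
    _ ≤ 16 * (∫ x in (0:ℝ)..L, (u x) ^ 2) * K := by
        apply mul_le_mul_of_nonneg_right _ hKnn
        linarith
end

section
/- Let c, K, θ, C̃ > 0 and γ ∈ (0,1). Let Y_l, Y_r : ℝ₊ → ℝ solve the ordinary differential equations Y_l' = −K Y_l/|Y_l|^γ and Y_r' = −K Y_r/|Y_r|^γ. Define L̃_θ(a,b) := (C̃ |a|^{γ+2}/(K(γ+2))) e^{θ (c/(Kγ)) |a|^γ} + (C̃ |b|^{γ+2}/(K(γ+2))) e^{θ (c/(Kγ)) |b|^γ}. Then for all t ≥ 0, (d/dt) L̃_θ(Y_l(t), Y_r(t)) ≤ −cθ L̃_θ(Y_l(t), Y_r(t)) − C̃ (Y_l(t)² + Y_r(t)²).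 -/
lemma core_ne' (α γ : ℝ) {y : ℝ} (hy : y ≠ 0) :
    HasDerivAt (fun x : ℝ => |x| ^ (γ + 2) * Real.exp (α * |x| ^ γ))
      (Real.exp (α * |y| ^ γ) *
        ((γ + 2) * |y| ^ (γ + 1) + α * γ * |y| ^ (2 * γ + 1)) * (SignType.sign y : ℝ)) y := by
  have hr : (0:ℝ) < |y| := abs_pos.2 hy
  have habs : HasDerivAt (fun x : ℝ => |x|) ((SignType.sign y : ℝ)) y := hasDerivAt_abs hy
  have h1 : HasDerivAt (fun x : ℝ => |x| ^ (γ + 2))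
      ((γ + 2) * |y| ^ (γ + 2 - 1) * (SignType.sign y : ℝ)) y :=
    (Real.hasDerivAt_rpow_const (Or.inl hr.ne')).comp y habs
  have h2 : HasDerivAt (fun x : ℝ => |x| ^ γ)
      (γ * |y| ^ (γ - 1) * (SignType.sign y : ℝ)) y :=
    (Real.hasDerivAt_rpow_const (Or.inl hr.ne')).comp y habs
  have h3 : HasDerivAt (fun x : ℝ => Real.exp (α * |x| ^ γ))
      (Real.exp (α * |y| ^ γ) * (α * (γ * |y| ^ (γ - 1) * (SignType.sign y : ℝ)))) y :=
    (Real.hasDerivAt_exp _).comp y (h2.const_mul α)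
  have := h1.mul h3
  refine this.congr_deriv ?_
  have e1 : |y| ^ (γ + 2 - 1) = |y| ^ γ * |y| := by
    rw [show γ + 2 - 1 = γ + 1 by ring, Real.rpow_add hr, Real.rpow_one]
  have e2 : |y| ^ (γ + 1) = |y| ^ γ * |y| := by rw [Real.rpow_add hr, Real.rpow_one]
  have e3 : |y| ^ (2 * γ + 1) = |y| ^ γ * |y| ^ γ * |y| := by
    rw [show 2*γ+1 = γ + (γ + 1) by ring, Real.rpow_add hr, Real.rpow_add hr, Real.rpow_one]; ring
  have e4 : |y| ^ (γ + 2) = |y| ^ γ * |y| * |y| := by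
    rw [show γ+2 = γ + 1 + 1 by ring, Real.rpow_add hr, Real.rpow_add hr, Real.rpow_one]
  have e5 : |y| ^ (γ - 1) = |y| ^ γ / |y| := by
    rw [show γ-1 = γ + -1 by ring, Real.rpow_add hr, Real.rpow_neg_one]; ring
  rw [e1, e2, e3, e4, e5]
  field_simp


lemma core_zero' (α γ : ℝ) (hγ : 0 < γ) :
    HasDerivAt (fun x : ℝ => |x| ^ (γ + 2) * Real.exp (α * |x| ^ γ)) 0 0 := by
  rw [hasDerivAt_iff_tendsto_slope]
  have hb : Filter.Tendsto (fun x : ℝ => |x| ^ (γ + 1) * Real.exp (α * |x| ^ γ))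
      (nhds 0) (nhds 0) := by
    have h1 : Filter.Tendsto (fun x : ℝ => |x| ^ (γ + 1)) (nhds 0) (nhds 0) := by
      have := (Real.continuousAt_rpow_const 0 (γ + 1) (Or.inr (by linarith))).tendsto
      simp only [Real.zero_rpow (by linarith : γ + 1 ≠ 0)] at this
      exact this.comp (by simpa using continuous_abs.tendsto (0:ℝ))
    have h2 : Filter.Tendsto (fun x : ℝ => Real.exp (α * |x| ^ γ)) (nhds 0) (nhds 1) := by
      have hg : Filter.Tendsto (fun x : ℝ => |x| ^ γ) (nhds 0) (nhds 0) := by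
        have := (Real.continuousAt_rpow_const 0 γ (Or.inr hγ.le)).tendsto
        simp only [Real.zero_rpow hγ.ne'] at this
        exact this.comp (by simpa using continuous_abs.tendsto (0:ℝ))
      have h := (Real.continuous_exp.tendsto 0).comp (by simpa using hg.const_mul α :
        Filter.Tendsto (fun x : ℝ => α * |x| ^ γ) (nhds 0) (nhds 0))
      rw [Real.exp_zero] at h
      exact h
    simpa using h1.mul h2
  refine squeeze_zero_norm' (f := slope (fun x : ℝ => |x| ^ (γ + 2) * Real.exp (α * |x| ^ γ)) 0) (a := fun x : ℝ => |x| ^ (γ + 1) * Real.exp (α * |x| ^ γ)) ?_ ?_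
  · filter_upwards [self_mem_nhdsWithin] with x (hx : x ≠ 0)
    have hr : (0:ℝ) < |x| := abs_pos.2 hx
    have hf0 : |(0:ℝ)| ^ (γ + 2) * Real.exp (α * |(0:ℝ)| ^ γ) = 0 := by
      simp [Real.zero_rpow (by linarith : γ + 2 ≠ 0)]
    rw [slope_def_field]
    simp only [hf0, sub_zero]
    rw [Real.norm_eq_abs, abs_div]
    have h1 : |(|x| ^ (γ + 2) * Real.exp (α * |x| ^ γ))| = |x| ^ (γ + 2) * Real.exp (α * |x| ^ γ) := by
      rw [abs_of_nonneg]; positivity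
    rw [h1, show γ + 2 = γ + 1 + 1 by ring, Real.rpow_add hr, Real.rpow_one]
    apply le_of_eq
    field_simp
  · exact hb.mono_left nhdsWithin_le_nhds

lemma aux8 (c K θ Ctil γ : ℝ) (hc : 0 < c) (hK : 0 < K) (hθ : 0 < θ)
    (hC : 0 < Ctil) (hγ : γ ∈ Set.Ioo (0:ℝ) 1) (Y : ℝ → ℝ) (t : ℝ)
    (hY : HasDerivWithinAt Y (-K * Y t / |Y t| ^ γ) (Set.Ici 0) t) :
    ∃ D : ℝ,
      HasDerivWithinAt
        (fun s => Ctil * |Y s| ^ (γ + 2) / (K * (γ + 2)) *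
          Real.exp (θ * (c / (K * γ)) * |Y s| ^ γ)) D (Set.Ici 0) t ∧
      D ≤ -(c * θ) * (Ctil * |Y t| ^ (γ + 2) / (K * (γ + 2)) *
          Real.exp (θ * (c / (K * γ)) * |Y t| ^ γ)) - Ctil * Y t ^ 2 := by
  obtain ⟨hγ0, hγ1⟩ := hγ
  set α : ℝ := θ * (c / (K * γ)) with hα_def
  have hα : 0 < α := by positivity
  set C : ℝ := Ctil / (K * (γ + 2)) with hC_def
  have hCpos : 0 < C := by positivity
  have hshape : (fun s => Ctil * |Y s| ^ (γ + 2) / (K * (γ + 2)) * Real.exp (α * |Y s| ^ γ))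
      = (fun s => C * (|Y s| ^ (γ + 2) * Real.exp (α * |Y s| ^ γ))) := by
    funext s; rw [hC_def]; ring
  rw [hshape]
  by_cases hy : Y t = 0
  · -- zero case
    have hY0 : HasDerivWithinAt Y 0 (Set.Ici 0) t := by
      have h0 : -K * Y t / |Y t| ^ γ = 0 := by rw [hy]; simp
      rwa [h0] at hY
    have hg : HasDerivAt (fun x : ℝ => |x| ^ (γ + 2) * Real.exp (α * |x| ^ γ)) 0 (Y t) := by
      rw [hy]; exact core_zero' α γ hγ0
    have hD := (hg.const_mul C).comp_hasDerivWithinAt t hY0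
    refine ⟨_, hD, ?_⟩
    rw [hy]
    simp [Real.zero_rpow (by positivity : γ + 2 ≠ 0)]
  · -- nonzero case
    have hr : (0 : ℝ) < |Y t| := abs_pos.2 hy
    have hg := core_ne' α γ hy
    have hD := (hg.const_mul C).comp_hasDerivWithinAt t hY
    refine ⟨_, hD, ?_⟩
    have e1 : |Y t| ^ (γ + 1) = |Y t| ^ γ * |Y t| := by
      rw [Real.rpow_add hr, Real.rpow_one]
    have e2 : |Y t| ^ (2 * γ + 1) = |Y t| ^ γ * |Y t| ^ γ * |Y t| := by
      rw [show 2*γ+1 = γ + (γ + 1) by ring, Real.rpow_add hr, Real.rpow_add hr,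
        Real.rpow_one, ← mul_assoc]
    have e4 : |Y t| ^ (γ + 2) = |Y t| ^ γ * |Y t| * |Y t| := by
      rw [show γ+2 = γ+1+1 by ring, Real.rpow_add hr, Real.rpow_add hr, Real.rpow_one]
    have hexp1 : 1 ≤ Real.exp (α * |Y t| ^ γ) :=
      Real.one_le_exp (by positivity)
    have hKne : K ≠ 0 := hK.ne'
    have hγne : γ ≠ 0 := hγ0.ne'
    have h2ne : γ + 2 ≠ 0 := by positivity
    have key : C * (Real.exp (α * |Y t| ^ γ) *
          ((γ + 2) * |Y t| ^ (γ + 1) + α * γ * |Y t| ^ (2 * γ + 1)) *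
          (SignType.sign (Y t) : ℝ)) * (-K * Y t / |Y t| ^ γ)
        = -(c * θ) * (Ctil * |Y t| ^ (γ + 2) / (K * (γ + 2)) * Real.exp (α * |Y t| ^ γ))
          - Ctil * Y t ^ 2 * Real.exp (α * |Y t| ^ γ) := by
      rcases lt_or_gt_of_ne hy with h | h
      · have hs : (SignType.sign (Y t) : ℝ) = -1 := by rw [sign_neg h]; simp
        have hab : |Y t| = -Y t := abs_of_neg h
        rw [e1, e2, e4, hs, hab, hα_def, hC_def]
        have hq : ((-Y t) ^ γ : ℝ) ≠ 0 := (Real.rpow_pos_of_pos (by linarith) γ).ne'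
        field_simp
        ring
      · have hs : (SignType.sign (Y t) : ℝ) = 1 := by rw [sign_pos h]; simp
        have hab : |Y t| = Y t := abs_of_pos h
        rw [e1, e2, e4, hs, hab, hα_def, hC_def]
        have hq : ((Y t) ^ γ : ℝ) ≠ 0 := (Real.rpow_pos_of_pos h γ).ne'
        field_simp
        ring
    rw [key]
    have h' : 0 ≤ Ctil * Y t ^ 2 * (Real.exp (α * |Y t| ^ γ) - 1) :=
      mul_nonneg (by positivity) (by linarith)
    nlinarith [h']

/-- Let `Y_l, Y_r` solve `Y' = −K Y/|Y|^γ` (with the convention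
`Y/|Y|^γ = 0` when `Y = 0`, which is Lean's convention `x/0 = 0`), and let
`L̃_θ(a,b) = (C̃|a|^{γ+2}/(K(γ+2))) e^{θ(c/(Kγ))|a|^γ} + (same in b)`. Then for
all `t ≥ 0` the derivative of `t ↦ L̃_θ(Y_l t, Y_r t)` exists and is at most
`−cθ L̃_θ(Y_l t, Y_r t) − C̃(Y_l t² + Y_r t²)`. -/
theorem stmt8 (c K θ Ctil γ : ℝ) (hc : 0 < c) (hK : 0 < K) (hθ : 0 < θ)
    (hC : 0 < Ctil) (hγ : γ ∈ Set.Ioo (0:ℝ) 1)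
    (Yl Yr : ℝ → ℝ)
    (hYl : ∀ t : ℝ, 0 ≤ t →
      HasDerivWithinAt Yl (-K * Yl t / |Yl t| ^ γ) (Set.Ici 0) t)
    (hYr : ∀ t : ℝ, 0 ≤ t →
      HasDerivWithinAt Yr (-K * Yr t / |Yr t| ^ γ) (Set.Ici 0) t)
    (Lt : ℝ → ℝ → ℝ)
    (hLt : ∀ a b : ℝ, Lt a b =
      Ctil * |a| ^ (γ + 2) / (K * (γ + 2)) * Real.exp (θ * (c / (K * γ)) * |a| ^ γ) +
      Ctil * |b| ^ (γ + 2) / (K * (γ + 2)) * Real.exp (θ * (c / (K * γ)) * |b| ^ γ)) :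
    ∀ t : ℝ, 0 ≤ t → ∃ D : ℝ,
      HasDerivWithinAt (fun s => Lt (Yl s) (Yr s)) D (Set.Ici 0) t ∧
      D ≤ -(c * θ) * Lt (Yl t) (Yr t) - Ctil * (Yl t ^ 2 + Yr t ^ 2) := by
  intro t ht
  obtain ⟨Dl, hDl, hDl'⟩ := aux8 c K θ Ctil γ hc hK hθ hC hγ Yl t (hYl t ht)
  obtain ⟨Dr, hDr, hDr'⟩ := aux8 c K θ Ctil γ hc hK hθ hC hγ Yr t (hYr t ht)
  refine ⟨Dl + Dr, ?_, ?_⟩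
  · simp only [hLt]
    exact hDl.add hDr
  · rw [hLt]
    linarith
end

section
/- Let c, L > 0. For every ε ∈ (0, c/L) there exists a unique α(ε) ∈ (0, ∞) satisfying sinh(L α(ε))/(L α(ε)) = c/(L ε). Moreover the map ε ↦ α(ε) is strictly decreasing on (0, c/L), α(ε) → +∞ as ε → 0⁺, and L α(ε)/ln(1/ε) → 1 as ε → 0⁺ (more precisely, L α(ε) = ln(1/ε) + O(ln(ln(1/ε))) as ε → 0⁺). -/
set_option maxHeartbeats 1000000
open Real Set Filter


lemma aux_sinh_lt {x : ℝ} (hx : 0 < x) : Real.sinh x < x * Real.cosh x := by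
  have h : StrictMonoOn (fun y => y * Real.cosh y - Real.sinh y) (Ici 0) := by
    apply strictMonoOn_of_deriv_pos (convex_Ici 0)
    · exact ((continuous_id.mul Real.continuous_cosh).sub Real.continuous_sinh).continuousOn
    · intro y hy
      rw [interior_Ici, mem_Ioi] at hy
      have h1 : HasDerivAt (fun y => y * Real.cosh y - Real.sinh y)
          (1 * Real.cosh y + y * Real.sinh y - Real.cosh y) y :=
        ((hasDerivAt_id y).mul (Real.hasDerivAt_cosh y)).sub (Real.hasDerivAt_sinh y)
      rw [h1.deriv]
      have h2 : 0 < Real.sinh y := Real.sinh_pos_iff.2 hy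
      nlinarith
  have := h (self_mem_Ici) (le_of_lt hx) hx
  simpa using this

lemma aux_shc_mono : StrictMonoOn (fun x => Real.sinh x / x) (Ioi 0) := by
  apply strictMonoOn_of_deriv_pos (convex_Ioi 0)
  · exact Real.continuous_sinh.continuousOn.div continuousOn_id (fun x hx => ne_of_gt hx)
  · intro x hx
    rw [interior_Ioi, mem_Ioi] at hx
    have h1 : HasDerivAt (fun x => Real.sinh x / x)
        ((Real.cosh x * x - Real.sinh x * 1) / x ^ 2) x :=
      (Real.hasDerivAt_sinh x).div (hasDerivAt_id x) hx.ne'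
    rw [h1.deriv]
    have h2 := aux_sinh_lt hx
    apply div_pos (by nlinarith) (by positivity)

lemma aux_shc_gt_one {x : ℝ} (hx : 0 < x) : 1 < Real.sinh x / x :=
  (one_lt_div hx).2 (Real.self_lt_sinh_iff.2 hx)

lemma aux_shc_exists {t : ℝ} (ht : 1 < t) : ∃ x, 0 < x ∧ Real.sinh x / x = t := by
  -- small point
  obtain ⟨a, ha0, ha1, hat⟩ : ∃ a, 0 < a ∧ a ≤ 1 ∧ Real.cosh a < t := by
    have hc : ContinuousAt Real.cosh 0 := Real.continuous_cosh.continuousAt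
    have hev : ∀ᶠ y in nhds (0:ℝ), Real.cosh y < t := by
      have : Real.cosh 0 < t := by simpa using ht
      exact hc.eventually_lt continuousAt_const this
    rw [Metric.eventually_nhds_iff] at hev
    obtain ⟨δ, hδ, hδ'⟩ := hev
    refine ⟨min (δ/2) 1, by positivity, min_le_right _ _, hδ' ?_⟩
    have hm : (0:ℝ) < min (δ/2) 1 := by positivity
    rw [Real.dist_eq, sub_zero, abs_of_pos hm]
    exact lt_of_le_of_lt (min_le_left _ _) (by linarith)
  set b : ℝ := 8 * t with hb
  have hb0 : 0 < b := by positivity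
  have hab : a < b := by nlinarith
  have hfb : t < Real.sinh b / b := by
    have h1 : Real.exp (b/2) * Real.exp (b/2) = Real.exp b := by
      rw [← Real.exp_add]; ring_nf
    have h2 : 1 + b/2 ≤ Real.exp (b/2) := by linarith [Real.add_one_le_exp (b/2)]
    have h5 : (1 + b/2) * (1 + b/2) ≤ Real.exp (b/2) * Real.exp (b/2) :=
      mul_le_mul h2 h2 (by positivity) (Real.exp_pos _).le
    have h3 : Real.exp (-b) ≤ 1 := by
      have := Real.exp_le_exp.2 (neg_nonpos_of_nonneg hb0.le)
      simpa using this
    have h4 : Real.sinh b = (Real.exp b - Real.exp (-b))/2 := Real.sinh_eq b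
    rw [lt_div_iff₀ hb0]
    nlinarith [h1, h3, h4, h5, hb0, ht]
  have hfa : Real.sinh a / a < t := by
    have := aux_sinh_lt ha0
    calc Real.sinh a / a < Real.cosh a := by rw [div_lt_iff₀ ha0]; linarith
    _ < t := hat
  have hcont : ContinuousOn (fun x => Real.sinh x / x) (Icc a b) := by
    apply Real.continuous_sinh.continuousOn.div continuousOn_id
    intro x hx; exact ne_of_gt (lt_of_lt_of_le ha0 hx.1)
  have := intermediate_value_Ioo hab.le hcont
  obtain ⟨x, hx, hxe⟩ := this ⟨hfa, hfb⟩
  exact ⟨x, lt_trans ha0 hx.1, hxe⟩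


noncomputable def phi (t : ℝ) : ℝ := if h : 1 < t then (aux_shc_exists h).choose else 1

lemma phi_pos {t : ℝ} (ht : 1 < t) : 0 < phi t := by
  rw [phi, dif_pos ht]; exact (aux_shc_exists ht).choose_spec.1

lemma phi_spec {t : ℝ} (ht : 1 < t) : Real.sinh (phi t) / phi t = t := by
  rw [phi, dif_pos ht]; exact (aux_shc_exists ht).choose_spec.2

lemma phi_unique {t : ℝ} (ht : 1 < t) {x : ℝ} (hx : 0 < x)
    (h : Real.sinh x / x = t) : x = phi t := by
  apply aux_shc_mono.injOn hx (phi_pos ht)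
  show Real.sinh x / x = Real.sinh (phi t) / (phi t)
  rw [h, phi_spec ht]

lemma phi_gt {t x : ℝ} (ht : 1 < t) (hx : 0 < x) (h : Real.sinh x / x < t) :
    x < phi t := by
  apply (aux_shc_mono.lt_iff_lt hx (phi_pos ht)).1
  show Real.sinh x / x < Real.sinh (phi t) / (phi t)
  rw [phi_spec ht]; exact h

lemma phi_strict {t₁ t₂ : ℝ} (h1 : 1 < t₁) (h : t₁ < t₂) : phi t₁ < phi t₂ :=
  phi_gt (h1.trans h) (phi_pos h1) (by rw [phi_spec h1]; exact h)

lemma log_le_half {x : ℝ} (hx : 0 < x) : Real.log x ≤ x / 2 := by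
  have h1 : Real.log (Real.sqrt x) = Real.log x / 2 := Real.log_sqrt hx.le
  have h2 : Real.log (Real.sqrt x) ≤ Real.sqrt x - 1 :=
    Real.log_le_sub_one_of_pos (Real.sqrt_pos.2 hx)
  nlinarith [Real.sq_sqrt hx.le, sq_nonneg (Real.sqrt x - 2), Real.sqrt_nonneg x]

/-- For `c, L > 0` and every `ε ∈ (0, c/L)` there is a unique
`α(ε) > 0` with `sinh(Lα(ε))/(Lα(ε)) = c/(Lε)`; the map `ε ↦ α(ε)` is strictly
decreasing on `(0, c/L)`, `α(ε) → ∞` as `ε → 0⁺`, and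
`L α(ε) = ln(1/ε) + O(ln(ln(1/ε)))` as `ε → 0⁺`; in particular
`L α(ε)/ln(1/ε) → 1` as `ε → 0⁺`. -/
theorem stmt19 (c L : ℝ) (hc : 0 < c) (hL : 0 < L) :
    ∃ α : ℝ → ℝ,
      (∀ ε ∈ Set.Ioo (0:ℝ) (c / L),
        0 < α ε ∧ Real.sinh (L * α ε) / (L * α ε) = c / (L * ε) ∧
        (∀ β : ℝ, 0 < β → Real.sinh (L * β) / (L * β) = c / (L * ε) → β = α ε)) ∧
      StrictAntiOn α (Set.Ioo (0:ℝ) (c / L)) ∧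
      Filter.Tendsto α (nhdsWithin 0 (Set.Ioi 0)) Filter.atTop ∧
      (∃ C ε₁ : ℝ, 0 < C ∧ 0 < ε₁ ∧ ∀ ε ∈ Set.Ioo (0:ℝ) ε₁,
        |L * α ε - Real.log ε⁻¹| ≤ C * Real.log (Real.log ε⁻¹)) ∧
      Filter.Tendsto (fun ε => L * α ε / Real.log ε⁻¹)
        (nhdsWithin 0 (Set.Ioi 0)) (nhds 1) := by
  set A : ℝ → ℝ := fun ε => phi (c / (L * ε)) / L with hA
  have ht1 : ∀ ε ∈ Set.Ioo (0:ℝ) (c/L), 1 < c / (L * ε) := by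
    rintro ε ⟨h0, h1⟩
    rw [one_lt_div (by positivity)]
    calc L * ε < L * (c / L) := by nlinarith
    _ = c := by field_simp
  have hLA : ∀ ε : ℝ, L * A ε = phi (c/(L*ε)) := by
    intro ε; simp only [hA]; field_simp
  have clause1 : ∀ ε ∈ Set.Ioo (0:ℝ) (c / L),
      0 < A ε ∧ Real.sinh (L * A ε) / (L * A ε) = c / (L * ε) ∧
      (∀ β : ℝ, 0 < β → Real.sinh (L * β) / (L * β) = c / (L * ε) → β = A ε) := by
    intro ε hε
    have h1 := ht1 ε hε
    have hp := phi_pos h1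
    refine ⟨by simp only [hA]; positivity, ?_, ?_⟩
    · rw [hLA ε]; exact phi_spec h1
    · intro β hβ hsp
      have hb : L * β = phi (c/(L*ε)) := phi_unique h1 (by positivity) hsp
      simp only [hA]
      rw [eq_div_iff hL.ne']
      linarith [hb]
  have clause2 : StrictAntiOn A (Set.Ioo (0:ℝ) (c / L)) := by
    intro ε₁ h1 ε₂ h2 hlt
    have ht2 := ht1 ε₂ h2
    have hdd : c / (L * ε₂) < c / (L * ε₁) :=
      div_lt_div_of_pos_left hc (mul_pos hL h1.1) ((mul_lt_mul_iff_right₀ hL).2 hlt)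
    have := phi_strict ht2 hdd
    simp only [hA]
    gcongr
  have clause3 : Filter.Tendsto A (nhdsWithin 0 (Set.Ioi 0)) Filter.atTop := by
    rw [tendsto_atTop]
    intro b
    set x₀ : ℝ := max (L * b) 1 with hx₀
    have hx₀p : (0:ℝ) < x₀ := lt_of_lt_of_le one_pos (le_max_right _ _)
    set T : ℝ := Real.sinh x₀ / x₀ with hT
    have hT1 : 1 < T := aux_shc_gt_one hx₀p
    have hδ : 0 < c / (L * T) := by positivity
    filter_upwards [Ioo_mem_nhdsGT_of_mem ⟨le_refl (0:ℝ), hδ⟩] with ε hε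
    obtain ⟨hε0, hεδ⟩ := hε
    have hεcL : ε < c / L := lt_of_lt_of_le hεδ
      (by apply le_of_lt; exact div_lt_div_of_pos_left hc hL (by nlinarith))
    have h1 := ht1 ε ⟨hε0, hεcL⟩
    have hTt : T < c / (L * ε) := by
      rw [lt_div_iff₀ (by positivity)]
      have h2 := (lt_div_iff₀ (by positivity : (0:ℝ) < L * T)).1 hεδ
      nlinarith
    have hgt := phi_gt h1 hx₀p (by rw [← hT]; exact hTt)
    have h3 : L * b < phi (c/(L*ε)) := lt_of_le_of_lt (le_max_left _ _) hgt
    simp only [hA]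
    rw [le_div_iff₀ hL]
    linarith
  obtain ⟨δ₀, hδ₀pos, hδ₀⟩ : ∃ δ₀ > 0, ∀ ε ∈ Set.Ioo (0:ℝ) δ₀,
      max 1 (L/(2*c)) / L ≤ A ε := by
    have h := clause3.eventually (eventually_ge_atTop (max 1 (L/(2*c)) / L))
    rw [eventually_iff, mem_nhdsGT_iff_exists_Ioo_subset] at h
    obtain ⟨u, hu, hsub⟩ := h
    exact ⟨u, hu, fun ε hε => hsub hε⟩
  set K := Real.log (3 * c / L) with hK
  set C := |K| + Real.log 3 + 1 with hC
  have hlog3 : 0 < Real.log 3 := Real.log_pos (by norm_num)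
  have hCpos : 0 < C := by positivity
  set ε₁ := min δ₀ (min (c/L) (min (Real.exp (-(Real.exp 1)))
      (Real.exp (-(2*|K|+1))))) with hε₁
  have hε₁pos : 0 < ε₁ := by positivity
  have invgt : ∀ a : ℝ, ∀ ε : ℝ, 0 < ε → ε < Real.exp (-a) → a < Real.log ε⁻¹ := by
    intro a ε hε0 hεa
    rw [Real.lt_log_iff_exp_lt (by positivity)]
    rw [Real.exp_neg] at hεa
    calc Real.exp a = ((Real.exp a)⁻¹)⁻¹ := (inv_inv _).symm
    _ < ε⁻¹ := by
        apply inv_strictAnti₀ hε0 hεa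
  have main : ∀ ε ∈ Set.Ioo (0:ℝ) ε₁,
      1 < Real.log ε⁻¹ ∧ |L * A ε - Real.log ε⁻¹| ≤ C * Real.log (Real.log ε⁻¹) := by
    rintro ε ⟨hε0, hεlt⟩
    have hεδ₀ : ε < δ₀ := lt_of_lt_of_le hεlt (min_le_left _ _)
    have hεcL : ε < c / L :=
      lt_of_lt_of_le hεlt ((min_le_right _ _).trans (min_le_left _ _))
    have hεe : ε < Real.exp (-(Real.exp 1)) :=
      lt_of_lt_of_le hεlt ((min_le_right _ _).trans ((min_le_right _ _).trans (min_le_left _ _)))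
    have hεK : ε < Real.exp (-(2*|K|+1)) :=
      lt_of_lt_of_le hεlt ((min_le_right _ _).trans ((min_le_right _ _).trans (min_le_right _ _)))
    set ℓ := Real.log ε⁻¹ with hℓdef
    set m := Real.log ℓ with hmdef
    have hℓe : Real.exp 1 < ℓ := invgt _ ε hε0 hεe
    have he1 : (2:ℝ) ≤ Real.exp 1 := by linarith [Real.add_one_le_exp 1]
    have hℓ1 : 1 < ℓ := by linarith
    have hℓK : 2*|K| + 1 < ℓ := invgt _ ε hε0 hεK
    have hm1 : 1 ≤ m := by
      rw [hmdef]
      calc (1:ℝ) = Real.log (Real.exp 1) := (Real.log_exp 1).symm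
      _ ≤ Real.log ℓ := Real.log_le_log (Real.exp_pos 1) hℓe.le
    -- setup
    have h1 := ht1 ε ⟨hε0, hεcL⟩
    set t := c / (L * ε) with htdef
    set x := L * A ε with hxdef
    have hxphi : x = phi t := hLA ε
    have hxpos : 0 < x := by rw [hxphi]; exact phi_pos h1
    have heq : Real.sinh x / x = t := by rw [hxphi]; exact phi_spec h1
    have hsinh : Real.sinh x = t * x := by
      field_simp at heq; linarith [heq]
    have hmax : max 1 (L/(2*c)) ≤ x := by
      have := hδ₀ ε ⟨hε0, hεδ₀⟩
      rw [div_le_iff₀ hL] at this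
      rw [hxdef]; linarith
    have hx1 : 1 ≤ x := le_trans (le_max_left _ _) hmax
    have hxc : L/(2*c) ≤ x := le_trans (le_max_right _ _) hmax
    have hexpeq : Real.exp x - Real.exp (-x) = 2 * (t * x) := by
      have h := Real.sinh_eq x
      rw [hsinh] at h; linarith
    -- lower bound
    have h2cx : 1 ≤ 2*c*x/L := by
      rw [le_div_iff₀ hL]
      have := (div_le_iff₀ (by positivity : (0:ℝ) < 2*c)).1 hxc
      nlinarith
    have h2tx : ε⁻¹ ≤ 2*t*x := by
      have hrw : 2*t*x = (2*c*x/L) * ε⁻¹ := by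
        rw [htdef]; field_simp; try ring
      calc ε⁻¹ = 1 * ε⁻¹ := (one_mul _).symm
      _ ≤ (2*c*x/L) * ε⁻¹ := mul_le_mul_of_nonneg_right h2cx (by positivity)
      _ = 2*t*x := hrw.symm
    have hexpgt : ε⁻¹ < Real.exp x := by
      have := Real.exp_pos (-x)
      nlinarith
    have hlow : ℓ < x := by
      rw [hℓdef]
      calc Real.log ε⁻¹ < Real.log (Real.exp x) :=
        Real.log_lt_log (by positivity) hexpgt
      _ = x := Real.log_exp x
    -- upper bound
    have htx1 : 1 ≤ t * x := by nlinarith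
    have hexpneg : Real.exp (-x) ≤ 1 := by
      rw [Real.exp_le_one_iff]; linarith
    have hexp_le : Real.exp x ≤ 3 * (t*x) := by nlinarith
    have hxle : x ≤ K + Real.log x + ℓ := by
      have h3 : (3:ℝ)*(t*x) = (3*c/L) * x * ε⁻¹ := by
        rw [htdef]; field_simp; try ring
      calc x = Real.log (Real.exp x) := (Real.log_exp x).symm
      _ ≤ Real.log (3*(t*x)) := Real.log_le_log (Real.exp_pos x) hexp_le
      _ = K + Real.log x + ℓ := by
          rw [h3, Real.log_mul (by positivity) (by positivity),
            Real.log_mul (by positivity) hxpos.ne', hK, hℓdef]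
    have hlogx : Real.log x ≤ x/2 := log_le_half hxpos
    have hKabs : K ≤ |K| := le_abs_self K
    have hx3ℓ : x ≤ 3*ℓ := by linarith
    have hlogx2 : Real.log x ≤ Real.log 3 + m := by
      calc Real.log x ≤ Real.log (3*ℓ) := Real.log_le_log hxpos hx3ℓ
      _ = Real.log 3 + m := by
          rw [Real.log_mul (by norm_num) (by linarith : (0:ℝ) < ℓ).ne', hmdef]
    refine ⟨hℓ1, ?_⟩
    rw [abs_of_nonneg (by linarith : (0:ℝ) ≤ x - ℓ)]
    have hmn : 0 ≤ m - 1 := by linarith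
    have hKn : 0 ≤ |K| := abs_nonneg K
    have hln : 0 ≤ Real.log 3 := hlog3.le
    calc x - ℓ ≤ K + Real.log 3 + m := by linarith
    _ ≤ |K| + Real.log 3 + m := by linarith
    _ ≤ C * m := by rw [hC]; nlinarith
  refine ⟨A, clause1, clause2, clause3, ⟨C, ε₁, hCpos, hε₁pos, fun ε hε => (main ε hε).2⟩, ?_⟩
  have hg : Filter.Tendsto (fun y : ℝ => Real.log y / y) atTop (nhds 0) := by
    have := Real.isLittleO_log_id_atTop.tendsto_div_nhds_zero
    simpa using this
  have hloginv : Filter.Tendsto (fun ε : ℝ => Real.log ε⁻¹) (nhdsWithin 0 (Set.Ioi 0)) atTop := by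
    have h1 : Filter.Tendsto Real.log (nhdsWithin 0 (Set.Ioi 0)) atBot :=
      Real.tendsto_log_nhdsGT_zero
    simp_rw [Real.log_inv]
    exact tendsto_neg_atBot_atTop.comp h1
  have hcomp : Filter.Tendsto (fun ε : ℝ => C * (Real.log (Real.log ε⁻¹) / Real.log ε⁻¹))
      (nhdsWithin 0 (Set.Ioi 0)) (nhds 0) := by
    have := (hg.comp hloginv).const_mul C
    simpa using this
  have habs : Filter.Tendsto (fun ε => |L * A ε / Real.log ε⁻¹ - 1|)
      (nhdsWithin 0 (Set.Ioi 0)) (nhds 0) := by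
    apply squeeze_zero' (Eventually.of_forall fun ε => abs_nonneg _) ?_ hcomp
    filter_upwards [Ioo_mem_nhdsGT_of_mem ⟨le_refl (0:ℝ), hε₁pos⟩] with ε hε
    obtain ⟨h1ℓ, hb⟩ := main ε hε
    have hℓpos : 0 < Real.log ε⁻¹ := by linarith
    have hrw : L * A ε / Real.log ε⁻¹ - 1 = (L * A ε - Real.log ε⁻¹) / Real.log ε⁻¹ := by
      rw [sub_div, div_self hℓpos.ne']
    rw [hrw, abs_div, abs_of_pos hℓpos]
    calc |L * A ε - Real.log ε⁻¹| / Real.log ε⁻¹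
        ≤ C * Real.log (Real.log ε⁻¹) / Real.log ε⁻¹ := (div_le_div_iff_of_pos_right hℓpos).2 hb
      _ = C * (Real.log (Real.log ε⁻¹) / Real.log ε⁻¹) := mul_div_assoc _ _ _
  have h0 : Filter.Tendsto (fun ε => L * A ε / Real.log ε⁻¹ - 1)
      (nhdsWithin 0 (Set.Ioi 0)) (nhds 0) := by
    rw [tendsto_zero_iff_abs_tendsto_zero]
    exact habs
  have := h0.add (tendsto_const_nhds (x := (1:ℝ)))
  simpa using this
end
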